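/- arXiv:1010.4063 — 6 statements merged into one kernel-verified Lean document; each statement's English description precedes it below -/
import Mathlib

section
/- If r and d are positive integers with d ≤ r ≤ 2d − 2, and α satisfies 0 < α < d/(r+1), then the sequence p_n^{r,d}, n = 0, 1, 2, …, is strictly increasing. -/
open Finset Filter Topology

/-- `p α r d n = P(S_{n+r} ≥ S'_n + d)` for independent binomials with success
probability `α`, given by its explicit combinatorial formula. -/
noncomputable def competeProb (α : ℝ) (r d n : ℕ) : ℝ :=
  ∑ i ∈ Finset.range (n + 1), ∑ j ∈ Finset.Icc (i + d) (n + r),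
    ((n + r).choose j : ℝ) * (n.choose i : ℝ) * α ^ (i + j) * (1 - α) ^ (2 * n + r - i - j)

open Polynomial

noncomputable def bp (a b : ℝ) (N : ℕ) : Polynomial ℝ :=
  (Polynomial.C b + Polynomial.C a * Polynomial.X) ^ N

lemma bp_coeff (a b : ℝ) (N : ℕ) : ∀ i, (bp a b N).coeff i = (N.choose i : ℝ) * a ^ i * b ^ (N - i) := by
  induction N with
  | zero =>
    intro i
    cases i with
    | zero => simp [bp]
    | succ i => simp [bp, Nat.choose_eq_zero_of_lt, coeff_one]
  | succ N ih =>
    intro i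
    have hbp : bp a b (N + 1) = bp a b N * Polynomial.C b + (bp a b N * Polynomial.C a) * Polynomial.X := by
      rw [bp, pow_succ, ← bp]; ring
    cases i with
    | zero =>
      rw [hbp]
      simp [coeff_mul_C, ih 0, pow_succ]
    | succ i =>
      rw [hbp, coeff_add, coeff_mul_X, coeff_mul_C, coeff_mul_C, ih, ih]
      by_cases hiN : N < i
      · rw [Nat.choose_eq_zero_of_lt hiN, Nat.choose_eq_zero_of_lt (by omega),
          Nat.choose_eq_zero_of_lt (by omega)]
        simp
      · push_neg at hiN
        by_cases hEq : i = N
        · subst hEq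
          rw [Nat.choose_self, Nat.choose_succ_self, Nat.choose_succ_succ, Nat.choose_self,
            Nat.choose_succ_self]
          simp [pow_succ]
        · have h1 : N - i = (N - (i+1)) + 1 := by omega
          have h2 : N + 1 - (i+1) = N - (i+1) + 1 := by omega
          rw [Nat.choose_succ_succ, h1, h2]
          push_cast
          ring

/-- the generating polynomial of `T = S_{n+r} + (n - S'_n)` -/
noncomputable def fpoly (α : ℝ) (r n : ℕ) : Polynomial ℝ := bp α (1-α) (n+r) * bp (1-α) α n

lemma fpoly_coeff_hi (α : ℝ) (r n s : ℕ) (hs : 2*n + r < s) : (fpoly α r n).coeff s = 0 := by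
  rw [fpoly, coeff_mul]
  apply Finset.sum_eq_zero
  intro p hp
  rw [Finset.HasAntidiagonal.mem_antidiagonal] at hp
  rw [bp_coeff, bp_coeff]
  by_cases h1 : n + r < p.1
  · rw [Nat.choose_eq_zero_of_lt h1]; simp
  · have h2 : n < p.2 := by omega
    rw [Nat.choose_eq_zero_of_lt h2]; simp

lemma competeProb_eq_tail (α : ℝ) (r d n : ℕ) :
    competeProb α r d n = ∑ s ∈ Finset.Icc (n+d) (2*n+r), (fpoly α r n).coeff s := by
  rw [competeProb]
  -- reflect i ↦ n - b
  rw [← Finset.sum_range_reflect]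
  have step1 : ∀ b ∈ Finset.range (n+1),
      (∑ j ∈ Finset.Icc (n - b + d) (n + r),
        ((n + r).choose j : ℝ) * (n.choose (n - b) : ℝ) * α ^ ((n-b) + j) * (1 - α) ^ (2 * n + r - (n-b) - j))
      = ∑ s ∈ Finset.Icc (n+d) (2*n+r), (bp α (1-α) (n+r)).coeff (s - b) * (bp (1-α) α n).coeff b := by
    intro b hb
    rw [Finset.mem_range] at hb
    have hb' : b ≤ n := by omega
    have hext : ∑ j ∈ Finset.Icc (n - b + d) (n + r),
        ((n + r).choose j : ℝ) * (n.choose (n - b) : ℝ) * α ^ ((n-b) + j) * (1 - α) ^ (2 * n + r - (n-b) - j)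
        = ∑ j ∈ Finset.Icc (n - b + d) (2*n + r - b),
        ((n + r).choose j : ℝ) * (n.choose (n - b) : ℝ) * α ^ ((n-b) + j) * (1 - α) ^ (2 * n + r - (n-b) - j) := by
      apply Finset.sum_subset
      · apply Finset.Icc_subset_Icc_right; omega
      · intro j hj hnj
        rw [Finset.mem_Icc] at hj hnj
        have : n + r < j := by omega
        rw [Nat.choose_eq_zero_of_lt this]
        simp
    rw [hext]
    have hmap : Finset.Icc (n + d) (2*n + r) = Finset.map (addRightEmbedding b) (Finset.Icc (n - b + d) (2*n + r - b)) := by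
      rw [Finset.map_add_right_Icc]
      congr 1 <;> omega
    rw [hmap, Finset.sum_map]
    apply Finset.sum_congr rfl
    intro j hj
    rw [Finset.mem_Icc] at hj
    simp only [addRightEmbedding_apply]
    rw [bp_coeff, bp_coeff]
    have h1 : j + b - b = j := by omega
    rw [h1]
    by_cases hjle : n + r < j
    · rw [Nat.choose_eq_zero_of_lt hjle]; simp
    push_neg at hjle
    have h2 : (n.choose (n-b) : ℝ) = (n.choose b : ℝ) := by rw [Nat.choose_symm hb']
    rw [h2]
    have h3 : (n - b) + j = j + (n - b) := by omega
    rw [h3, pow_add]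
    have h4 : 2 * n + r - (n - b) - j = (n + r - j) + b := by omega
    rw [h4, pow_add]
    ring
  simp only [Nat.add_sub_cancel]
  rw [Finset.sum_congr rfl step1, Finset.sum_comm]
  apply Finset.sum_congr rfl
  intro s hs
  rw [Finset.mem_Icc] at hs
  rw [fpoly, mul_comm (bp α (1-α) (n+r)), coeff_mul,
    Finset.Nat.sum_antidiagonal_eq_sum_range_succ_mk]
  have htr : ∀ x ∈ Finset.range (s+1), x ∉ Finset.range (n+1) →
      (bp (1-α) α n).coeff x * (bp α (1-α) (n+r)).coeff (s - x) = 0 := by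
    intro x _ hx
    rw [Finset.mem_range] at hx
    rw [bp_coeff, Nat.choose_eq_zero_of_lt (by omega)]
    simp
  rw [← Finset.sum_subset (Finset.range_subset_range.2 (by omega)) htr]
  apply Finset.sum_congr rfl
  intro b _
  ring

lemma fpoly_succ (α : ℝ) (r n : ℕ) :
    fpoly α r (n+1) = fpoly α r n * (bp α (1-α) 1 * bp (1-α) α 1) := by
  show bp α (1-α) (n+1+r) * bp (1-α) α (n+1) = _
  rw [fpoly, bp, bp, bp, bp, bp, bp]
  ring

lemma gpoly_eq (α : ℝ) : bp α (1-α) 1 * bp (1-α) α 1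
    = Polynomial.C (α*(1-α)) + Polynomial.C (α^2+(1-α)^2) * Polynomial.X
      + Polynomial.C (α*(1-α)) * Polynomial.X^2 := by
  rw [bp, bp, pow_one, pow_one]
  have : (α : ℝ) ^ 2 + (1-α)^2 = α*α + (1-α)*(1-α) := by ring
  rw [this]
  simp only [map_add, map_mul]
  ring

lemma coeff_mul_g (α : ℝ) (p : Polynomial ℝ) (s : ℕ) :
    (p * (bp α (1-α) 1 * bp (1-α) α 1)).coeff (s+2)
    = (α*(1-α)) * p.coeff (s+2) + (α^2+(1-α)^2) * p.coeff (s+1) + (α*(1-α)) * p.coeff s := by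
  rw [gpoly_eq]
  have hexp : p * (Polynomial.C (α*(1-α)) + Polynomial.C (α^2+(1-α)^2) * Polynomial.X
      + Polynomial.C (α*(1-α)) * Polynomial.X^2)
      = p * Polynomial.C (α*(1-α)) + (p * Polynomial.C (α^2+(1-α)^2)) * Polynomial.X
      + (p * Polynomial.C (α*(1-α))) * Polynomial.X^2 := by ring
  rw [hexp, coeff_add, coeff_add, coeff_mul_C]
  have h1 : ((p * Polynomial.C (α^2+(1-α)^2)) * Polynomial.X).coeff (s+2)
      = p.coeff (s+1) * (α^2+(1-α)^2) := by
    rw [coeff_mul_X, coeff_mul_C]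
  have h2 : ((p * Polynomial.C (α*(1-α))) * Polynomial.X^2).coeff (s+2)
      = p.coeff s * (α*(1-α)) := by
    rw [coeff_mul_X_pow, coeff_mul_C]
  rw [h1, h2]
  ring

lemma step_eq (α : ℝ) (r e n : ℕ) (hr : e + 1 ≤ r) :
    competeProb α r (e+1) (n+1) = competeProb α r (e+1) n
      + (α*(1-α)) * ((fpoly α r n).coeff (n+e) - (fpoly α r n).coeff (n+e+1)) := by
  have hA : n + e + 1 ≤ 2*n + r := by omega
  rw [competeProb_eq_tail, competeProb_eq_tail, fpoly_succ]
  -- reindex the (n+1) sum: Icc (n+1+(e+1)) (2*(n+1)+r) = map (+2) (Icc (n+e) (2n+r))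
  have hmap : Finset.Icc (n+1+(e+1)) (2*(n+1)+r)
      = Finset.map (addRightEmbedding 2) (Finset.Icc (n+e) (2*n+r)) := by
    rw [Finset.map_add_right_Icc]
    congr 1 <;> omega
  rw [hmap, Finset.sum_map]
  simp only [addRightEmbedding_apply]
  have hg : ∀ s ∈ Finset.Icc (n+e) (2*n+r),
      (fpoly α r n * (bp α (1-α) 1 * bp (1-α) α 1)).coeff (s+2)
      = (α*(1-α)) * (fpoly α r n).coeff (s+2) + (α^2+(1-α)^2) * (fpoly α r n).coeff (s+1)
        + (α*(1-α)) * (fpoly α r n).coeff s := fun s _ => coeff_mul_g α (fpoly α r n) s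
  rw [Finset.sum_congr rfl hg, Finset.sum_add_distrib, Finset.sum_add_distrib,
    ← Finset.mul_sum, ← Finset.mul_sum, ← Finset.mul_sum]
  -- Let S ab := tail sums
  set F := fun s => (fpoly α r n).coeff s with hF
  -- sum of F (s+2) over Icc (n+e) (2n+r) = sum F over Icc (n+e+2) (2n+r+2)
  have hsh2 : ∑ s ∈ Finset.Icc (n+e) (2*n+r), F (s+2) = ∑ s ∈ Finset.Icc (n+e+2) (2*n+r+2), F s := by
    have : Finset.Icc (n+e+2) (2*n+r+2) = Finset.map (addRightEmbedding 2) (Finset.Icc (n+e) (2*n+r)) := by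
      rw [Finset.map_add_right_Icc]
    rw [this, Finset.sum_map]; simp only [addRightEmbedding_apply]
  have hsh1 : ∑ s ∈ Finset.Icc (n+e) (2*n+r), F (s+1) = ∑ s ∈ Finset.Icc (n+e+1) (2*n+r+1), F s := by
    have : Finset.Icc (n+e+1) (2*n+r+1) = Finset.map (addRightEmbedding 1) (Finset.Icc (n+e) (2*n+r)) := by
      rw [Finset.map_add_right_Icc]
    rw [this, Finset.sum_map]; simp only [addRightEmbedding_apply]
  rw [hsh2, hsh1]
  have z1 : F (2*n+r+1) = 0 := by simp only [hF]; exact fpoly_coeff_hi α r n _ (by omega)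
  have z2 : F (2*n+r+1+1) = 0 := by simp only [hF]; exact fpoly_coeff_hi α r n _ (by omega)
  have htop2 : ∑ s ∈ Finset.Icc (n+e+2) (2*n+r+2), F s = ∑ s ∈ Finset.Icc (n+e+2) (2*n+r), F s := by
    rw [show (2*n+r+2) = (2*n+r+1)+1 from rfl, Finset.sum_Icc_succ_top (by omega) F,
      Finset.sum_Icc_succ_top (by omega) F, z1, z2]
    ring
  have htop1 : ∑ s ∈ Finset.Icc (n+e+1) (2*n+r+1), F s = ∑ s ∈ Finset.Icc (n+e+1) (2*n+r), F s := by
    rw [Finset.sum_Icc_succ_top (by omega) F, z1]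
    ring
  rw [htop2, htop1]
  have h1 : ∑ s ∈ Finset.Icc (n+e+1) (2*n+r), F s
      = F (n+e+1) + ∑ s ∈ Finset.Icc (n+e+2) (2*n+r), F s := by
    rw [Finset.Icc_eq_cons_Ioc hA, Finset.sum_cons, ← Finset.Icc_add_one_left_eq_Ioc]; rfl
  have h0 : ∑ s ∈ Finset.Icc (n+e) (2*n+r), F s
      = F (n+e) + ∑ s ∈ Finset.Icc (n+e+1) (2*n+r), F s := by
    rw [Finset.Icc_eq_cons_Ioc (by omega), Finset.sum_cons, ← Finset.Icc_add_one_left_eq_Ioc]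
  have hgoal : (Finset.Icc (n+(e+1)) (2*n+r)).sum F = ∑ s ∈ Finset.Icc (n+e+1) (2*n+r), F s := rfl
  rw [hgoal, h1, h0, h1]
  ring

noncomputable def vco (α : ℝ) (r l : ℕ) : ℝ := (r.choose l : ℝ) * α^l * (1-α)^(r-l)

noncomputable def Dr (m' t : ℕ) : ℝ := ((2*m').choose (m'+t) : ℝ) - ((2*m').choose (m'+t+1) : ℝ)

lemma wcoeff (α : ℝ) (r m' : ℕ) (j : ℕ) :
    (bp α (1-α) r * bp 1 1 (2*m')).coeff j
    = ∑ l ∈ Finset.range (j+1), vco α r l * ((2*m').choose (j-l) : ℝ) := by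
  rw [coeff_mul, Finset.Nat.sum_antidiagonal_eq_sum_range_succ_mk]
  apply Finset.sum_congr rfl
  intro l _
  rw [bp_coeff, bp_coeff, vco]
  simp

lemma Wdiff (α : ℝ) (r e m' : ℕ) (hre : r ≤ 2*e) :
    (bp α (1-α) r * bp 1 1 (2*m')).coeff (m'+e) - (bp α (1-α) r * bp 1 1 (2*m')).coeff (m'+e+1)
    = ∑ t ∈ Finset.range (e+1), (vco α r (e-t) - vco α r (e+1+t)) * Dr m' t := by
  have hc1 : (bp α (1-α) r * bp 1 1 (2*m')).coeff (m'+e)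
      = ∑ t ∈ Finset.range (e+1), vco α r (e-t) * ((2*m').choose (m'+t) : ℝ)
        + ∑ x ∈ Finset.range m', vco α r (e+1+x) * ((2*m').choose (m'+x+1) : ℝ) := by
    rw [wcoeff]
    have hsp := Finset.sum_range_add (fun l => vco α r l * ((2*m').choose (m'+e-l) : ℝ)) (e+1) m'
    rw [show m'+e+1 = e+1+m' from by omega, hsp]
    congr 1
    · rw [← Finset.sum_range_reflect]
      apply Finset.sum_congr rfl
      intro t ht
      rw [Finset.mem_range] at ht
      rw [show e+1-1-t = e-t from by omega, show m'+e-(e-t) = m'+t from by omega]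
    · apply Finset.sum_congr rfl
      intro x hx
      rw [Finset.mem_range] at hx
      rw [show m'+e-(e+1+x) = 2*m' - (m'+x+1) from by omega, Nat.choose_symm (by omega)]
  have hc2 : (bp α (1-α) r * bp 1 1 (2*m')).coeff (m'+e+1)
      = ∑ t ∈ Finset.range (e+1), vco α r (e-t) * ((2*m').choose (m'+t+1) : ℝ)
        + ∑ x ∈ Finset.range (m'+1), vco α r (e+1+x) * ((2*m').choose (m'+x) : ℝ) := by
    rw [wcoeff]
    have hsp := Finset.sum_range_add (fun l => vco α r l * ((2*m').choose (m'+e+1-l) : ℝ)) (e+1) (m'+1)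
    rw [show m'+e+1+1 = e+1+(m'+1) from by omega, hsp]
    congr 1
    · rw [← Finset.sum_range_reflect]
      apply Finset.sum_congr rfl
      intro t ht
      rw [Finset.mem_range] at ht
      rw [show e+1-1-t = e-t from by omega, show m'+e+1-(e-t) = m'+t+1 from by omega]
    · apply Finset.sum_congr rfl
      intro x hx
      rw [Finset.mem_range] at hx
      rw [show m'+e+1-(e+1+x) = 2*m' - (m'+x) from by omega, Nat.choose_symm (by omega)]
  rw [hc1, hc2]
  set M := max (e+1) (m'+1) with hM
  have hB' : ∑ x ∈ Finset.range (m'+1), vco α r (e+1+x) * ((2*m').choose (m'+x) : ℝ)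
      = ∑ x ∈ Finset.range M, vco α r (e+1+x) * ((2*m').choose (m'+x) : ℝ) := by
    apply Finset.sum_subset (Finset.range_subset_range.2 (le_max_right _ _))
    intro x _ hx
    rw [Finset.mem_range] at hx
    rw [Nat.choose_eq_zero_of_lt (by omega)]
    simp
  have hB : ∑ x ∈ Finset.range m', vco α r (e+1+x) * ((2*m').choose (m'+x+1) : ℝ)
      = ∑ x ∈ Finset.range M, vco α r (e+1+x) * ((2*m').choose (m'+x+1) : ℝ) := by
    apply Finset.sum_subset (Finset.range_subset_range.2 (by omega))
    intro x _ hx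
    rw [Finset.mem_range] at hx
    rw [Nat.choose_eq_zero_of_lt (by omega)]
    simp
  have hR : ∑ x ∈ Finset.range M, vco α r (e+1+x) * ((2*m').choose (m'+x) : ℝ)
        - ∑ x ∈ Finset.range M, vco α r (e+1+x) * ((2*m').choose (m'+x+1) : ℝ)
      = ∑ t ∈ Finset.range (e+1), vco α r (e+1+t) * Dr m' t := by
    rw [← Finset.sum_sub_distrib]
    have : ∀ x, vco α r (e+1+x) * ((2*m').choose (m'+x) : ℝ)
        - vco α r (e+1+x) * ((2*m').choose (m'+x+1) : ℝ) = vco α r (e+1+x) * Dr m' x := by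
      intro x; rw [Dr]; ring
    rw [Finset.sum_congr rfl (fun x _ => this x)]
    symm
    apply Finset.sum_subset (Finset.range_subset_range.2 (le_max_left _ _))
    intro x _ hx
    rw [Finset.mem_range] at hx
    rw [vco, Nat.choose_eq_zero_of_lt (by omega)]
    simp
  rw [hB', hB]
  have hAA : ∑ t ∈ Finset.range (e+1), vco α r (e-t) * ((2*m').choose (m'+t) : ℝ)
        - ∑ t ∈ Finset.range (e+1), vco α r (e-t) * ((2*m').choose (m'+t+1) : ℝ)
      = ∑ t ∈ Finset.range (e+1), vco α r (e-t) * Dr m' t := by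
    rw [← Finset.sum_sub_distrib]
    apply Finset.sum_congr rfl
    intro t _
    rw [Dr]; ring
  have hfin : ∑ t ∈ Finset.range (e+1), (vco α r (e-t) - vco α r (e+1+t)) * Dr m' t
      = ∑ t ∈ Finset.range (e+1), vco α r (e-t) * Dr m' t
        - ∑ t ∈ Finset.range (e+1), vco α r (e+1+t) * Dr m' t := by
    rw [← Finset.sum_sub_distrib]
    apply Finset.sum_congr rfl
    intro t _
    ring
  linarith [hR, hAA, hfin]

lemma fpoly_factor (α : ℝ) (r n : ℕ) :
    fpoly α r n = (Polynomial.C ((1-2*α)^2) * Polynomial.X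
      + Polynomial.C (α*(1-α)) * bp 1 1 2)^n * bp α (1-α) r := by
  have hg : Polynomial.C ((1-2*α)^2) * Polynomial.X + Polynomial.C (α*(1-α)) * bp 1 1 2
      = (Polynomial.C (1-α) + Polynomial.C α * Polynomial.X)
        * (Polynomial.C α + Polynomial.C (1-α) * Polynomial.X) := by
    rw [bp]
    simp only [map_pow, map_sub, map_mul, map_one, map_add, map_ofNat]
    ring
  rw [hg, fpoly, bp, bp, bp, mul_pow]
  ring

lemma fpoly_coeff_decomp (α : ℝ) (r n : ℕ) (j : ℕ) :
    (fpoly α r n).coeff (n+j)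
    = ∑ k ∈ Finset.range (n+1), ((n.choose k : ℝ) * ((1-2*α)^2)^k * (α*(1-α))^(n-k))
        * (bp α (1-α) r * bp 1 1 (2*(n-k))).coeff ((n-k)+j) := by
  rw [fpoly_factor, add_pow, Finset.sum_mul, finset_sum_coeff]
  apply Finset.sum_congr rfl
  intro k hk
  rw [Finset.mem_range] at hk
  have hterm : (Polynomial.C ((1-2*α)^2) * Polynomial.X)^k
        * (Polynomial.C (α*(1-α)) * bp 1 1 2)^(n-k) * ((n.choose k : ℕ) : Polynomial ℝ)
        * bp α (1-α) r
      = Polynomial.C (((n.choose k : ℝ)) * ((1-2*α)^2)^k * (α*(1-α))^(n-k))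
        * (Polynomial.X^k * (bp α (1-α) r * bp 1 1 (2*(n-k)))) := by
    rw [← Polynomial.C_eq_natCast]
    have hb2 : (bp 1 1 2 : Polynomial ℝ)^(n-k) = bp 1 1 (2*(n-k)) := by
      rw [bp, bp, ← pow_mul]
    rw [mul_pow, mul_pow, hb2, ← map_pow, ← map_pow]
    simp only [map_mul]
    ring
  rw [hterm, coeff_C_mul, show n + j = ((n-k)+j) + k from by omega, coeff_X_pow_mul]

lemma nat_claim (r e : ℕ) (hre : r ≤ 2*e) (hd : e+1 ≤ r) :
    ∀ t, e+1+t ≤ r → r.choose (e+1+t) * (e+1)^(2*t+1) ≤ r.choose (e-t) * (r-e)^(2*t+1) := by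
  intro t
  induction t with
  | zero =>
    intro _
    simpa using (Nat.choose_succ_right_eq r e).le
  | succ t ih =>
    intro ht
    have ih' := ih (by omega)
    have i1 : r.choose (e+2+t) * (e+2+t) = r.choose (e+1+t) * (r - (e+1+t)) := by
      have := Nat.choose_succ_right_eq r (e+1+t)
      rwa [show e+1+t+1 = e+2+t from by omega] at this
    have i2 : r.choose (e-t) * (e-t) = r.choose (e-t-1) * (r - (e-t-1)) := by
      have := Nat.choose_succ_right_eq r (e-t-1)
      rwa [show e-t-1+1 = e-t from by omega] at this
    have key : (r-(e-t-1)) * (r-(e+1+t)) * (e+1)^2 ≤ (e+2+t) * (e-t) * (r-e)^2 := by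
      have h1 : e-t-1 ≤ r := by omega
      have h2 : e+1+t ≤ r := by omega
      have h3 : e ≤ r := by omega
      have h4 : t ≤ e := by omega
      have h5 : 1 ≤ e - t := by omega
      zify [h1, h2, h3, h4, h5]
      have hE2 : ((r:ℤ) - e)^2 ≤ ((e:ℤ)+1)^2 := by
        have hc : (r:ℤ) ≤ 2*e := by exact_mod_cast hre
        have hc2 : (e:ℤ) ≤ r := by exact_mod_cast h3
        nlinarith
      nlinarith [mul_le_mul_of_nonneg_left hE2 (sq_nonneg ((t:ℤ)+1))]
    have local_ : r.choose (e-t) * r.choose (e+2+t) * (e+1)^2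
        ≤ r.choose (e-t-1) * r.choose (e+1+t) * (r-e)^2 := by
      have hpos : 0 < (e+2+t) * (e-t) := Nat.mul_pos (by omega) (by omega)
      apply Nat.le_of_mul_le_mul_right _ hpos
      calc (r.choose (e-t) * r.choose (e+2+t) * (e+1)^2) * ((e+2+t)*(e-t))
          = (r.choose (e-t) * (e-t)) * (r.choose (e+2+t) * (e+2+t)) * (e+1)^2 := by ring
        _ = (r.choose (e-t-1) * (r-(e-t-1))) * (r.choose (e+1+t) * (r-(e+1+t))) * (e+1)^2 := by
            rw [i1, i2]
        _ = (r.choose (e-t-1) * r.choose (e+1+t)) * ((r-(e-t-1)) * (r-(e+1+t)) * (e+1)^2) := by ring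
        _ ≤ (r.choose (e-t-1) * r.choose (e+1+t)) * ((e+2+t) * (e-t) * (r-e)^2) :=
            Nat.mul_le_mul_left _ key
        _ = (r.choose (e-t-1) * r.choose (e+1+t) * (r-e)^2) * ((e+2+t)*(e-t)) := by ring
    rw [show e+1+(t+1) = e+2+t from by omega, show e-(t+1) = e-t-1 from by omega,
      show 2*(t+1)+1 = 2*t+3 from by omega]
    have chain : r.choose (e+1+t) * (r.choose (e+2+t) * (e+1)^(2*t+3))
        ≤ r.choose (e+1+t) * (r.choose (e-t-1) * (r-e)^(2*t+3)) := by
      calc r.choose (e+1+t) * (r.choose (e+2+t) * (e+1)^(2*t+3))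
          = (r.choose (e+2+t) * (e+1)^2) * (r.choose (e+1+t) * (e+1)^(2*t+1)) := by ring
        _ ≤ (r.choose (e+2+t) * (e+1)^2) * (r.choose (e-t) * (r-e)^(2*t+1)) :=
            Nat.mul_le_mul_left _ ih'
        _ = (r.choose (e-t) * r.choose (e+2+t) * (e+1)^2) * (r-e)^(2*t+1) := by ring
        _ ≤ (r.choose (e-t-1) * r.choose (e+1+t) * (r-e)^2) * (r-e)^(2*t+1) :=
            Nat.mul_le_mul_right _ local_
        _ = r.choose (e+1+t) * (r.choose (e-t-1) * (r-e)^(2*t+3)) := by ring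
    exact Nat.le_of_mul_le_mul_left chain (Nat.choose_pos (by omega))

lemma Dr_nonneg (m' t : ℕ) : 0 ≤ Dr m' t := by
  rw [Dr, sub_nonneg]
  have h := Nat.choose_succ_right_eq (2*m') (m'+t)
  have h2 : (2*m').choose (m'+t+1) * (m'+t+1) ≤ (2*m').choose (m'+t) * (m'+t+1) := by
    rw [h]
    exact Nat.mul_le_mul_left _ (by omega)
  exact_mod_cast Nat.le_of_mul_le_mul_right h2 (by omega)

lemma Dr_pos (n : ℕ) : 0 < Dr n 0 := by
  rw [Dr, sub_pos]
  have h := Nat.choose_succ_right_eq (2*n) (n+0)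
  have hpos : 0 < (2*n).choose (n+0) := Nat.choose_pos (by omega)
  have h2 : (2*n).choose (n+0+1) * (n+1) < (2*n).choose (n+0) * (n+1) := by
    rw [h]
    have : 2*n - (n+0) = n := by omega
    rw [this]
    exact Nat.mul_lt_mul_of_pos_left (by omega) hpos
  exact_mod_cast Nat.lt_of_mul_lt_mul_right h2

section
variable (α : ℝ) (r e : ℕ)

lemma vco_nonneg (hα0 : 0 < α) (hα1 : α < 1) (l : ℕ) : 0 ≤ vco α r l := by
  rw [vco]
  have : (0:ℝ) ≤ 1 - α := by linarith
  positivity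

lemma vco_le (hd : e+1 ≤ r) (hre : r ≤ 2*e) (hα0 : 0 < α) (hα1 : α < 1)
    (hαE : α * ((r:ℝ) - e) ≤ (1-α) * (e+1)) (t : ℕ) (hte : t ≤ e) :
    vco α r (e+1+t) ≤ vco α r (e-t) := by
  by_cases htr : e+1+t ≤ r
  · have hclaim := nat_claim r e hre hd t htr
    have hcast : ((r.choose (e+1+t)):ℝ) * ((e:ℝ)+1)^(2*t+1) ≤ (r.choose (e-t) : ℝ) * ((r:ℝ)-e)^(2*t+1) := by
      have := Nat.cast_le (α := ℝ) |>.mpr hclaim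
      push_cast [Nat.cast_sub (show e ≤ r from by omega)] at this
      convert this using 2 <;> push_cast <;> ring
    have hβ : (0:ℝ) < 1 - α := by linarith
    -- key : choose(e+1+t) * α^(2t+1) ≤ choose(e-t) * (1-α)^(2t+1)
    have hkey : ((r.choose (e+1+t)):ℝ) * α^(2*t+1) ≤ (r.choose (e-t) : ℝ) * (1-α)^(2*t+1) := by
      have he1 : (0:ℝ) < ((e:ℝ)+1)^(2*t+1) := by positivity
      rw [← mul_le_mul_iff_of_pos_right he1]
      calc ((r.choose (e+1+t)):ℝ) * α^(2*t+1) * ((e:ℝ)+1)^(2*t+1)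
          = ((r.choose (e+1+t)):ℝ) * ((e:ℝ)+1)^(2*t+1) * α^(2*t+1) := by ring
        _ ≤ (r.choose (e-t) : ℝ) * ((r:ℝ)-e)^(2*t+1) * α^(2*t+1) := by
            apply mul_le_mul_of_nonneg_right hcast (by positivity)
        _ = (r.choose (e-t) : ℝ) * (α*((r:ℝ)-e))^(2*t+1) := by rw [mul_pow]; ring
        _ ≤ (r.choose (e-t) : ℝ) * ((1-α)*((e:ℝ)+1))^(2*t+1) := by
            apply mul_le_mul_of_nonneg_left _ (by positivity)
            apply pow_le_pow_left₀ _ hαE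
            have : (0:ℝ) ≤ (r:ℝ) - e := by
              have : (e:ℝ) ≤ r := by exact_mod_cast (show e ≤ r from by omega)
              linarith
            positivity
        _ = (r.choose (e-t) : ℝ) * (1-α)^(2*t+1) * ((e:ℝ)+1)^(2*t+1) := by rw [mul_pow]; ring
    rw [vco, vco]
    have hsplit1 : α^(e+1+t) = α^(2*t+1) * α^(e-t) := by
      rw [← pow_add]; congr 1; omega
    have hsplit2 : (1-α)^(r-(e-t)) = (1-α)^(2*t+1) * (1-α)^(r-(e+1+t)) := by
      rw [← pow_add]; congr 1; omega
    rw [hsplit1, hsplit2]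
    calc (r.choose (e+1+t) : ℝ) * (α^(2*t+1) * α^(e-t)) * (1-α)^(r-(e+1+t))
        = ((r.choose (e+1+t) : ℝ) * α^(2*t+1)) * (α^(e-t) * (1-α)^(r-(e+1+t))) := by ring
      _ ≤ ((r.choose (e-t) : ℝ) * (1-α)^(2*t+1)) * (α^(e-t) * (1-α)^(r-(e+1+t))) := by
          apply mul_le_mul_of_nonneg_right hkey (by positivity)
      _ = (r.choose (e-t) : ℝ) * α^(e-t) * ((1-α)^(2*t+1) * (1-α)^(r-(e+1+t))) := by ring
  · rw [vco, Nat.choose_eq_zero_of_lt (by omega)]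
    simp only [Nat.cast_zero, zero_mul]
    exact vco_nonneg α r hα0 hα1 _

lemma vco_lt (hd : e+1 ≤ r) (hα0 : 0 < α) (hα1 : α < 1)
    (hαE : α * ((r:ℝ) - e) < (1-α) * (e+1)) :
    vco α r (e+1) < vco α r e := by
  have hβ : (0:ℝ) < 1 - α := by linarith
  have hch := Nat.choose_succ_right_eq r e
  have hcast : ((r.choose (e+1)):ℝ) * ((e:ℝ)+1) = (r.choose e : ℝ) * ((r:ℝ)-e) := by
    have h' : ((r.choose (e+1) * (e+1) : ℕ) : ℝ) = ((r.choose e * (r - e) : ℕ) : ℝ) := by rw [hch]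
    push_cast [Nat.cast_sub (show e ≤ r from by omega)] at h'
    exact_mod_cast h'
  have hpos : (0:ℝ) < (r.choose e : ℝ) * α^e * (1-α)^(r-(e+1)) := by
    have : 0 < r.choose e := Nat.choose_pos (by omega)
    positivity
  have he1 : (0:ℝ) < (e:ℝ)+1 := by positivity
  rw [← mul_lt_mul_iff_of_pos_right he1, vco, vco]
  calc (r.choose (e+1) : ℝ) * α^(e+1) * (1-α)^(r-(e+1)) * ((e:ℝ)+1)
      = ((r.choose (e+1):ℝ) * ((e:ℝ)+1)) * α^(e+1) * (1-α)^(r-(e+1)) := by ring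
    _ = ((r.choose e : ℝ) * ((r:ℝ)-e)) * α^(e+1) * (1-α)^(r-(e+1)) := by rw [hcast]
    _ = ((r.choose e : ℝ) * α^e * (1-α)^(r-(e+1))) * (α * ((r:ℝ)-e)) := by rw [pow_succ]; ring
    _ < ((r.choose e : ℝ) * α^e * (1-α)^(r-(e+1))) * ((1-α) * ((e:ℝ)+1)) := by
        exact mul_lt_mul_of_pos_left hαE hpos
    _ = (r.choose e : ℝ) * α^e * ((1-α)^(r-(e+1)) * (1-α)) * ((e:ℝ)+1) := by ring
    _ = (r.choose e : ℝ) * α^e * (1-α)^(r-e) * ((e:ℝ)+1) := by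
        rw [← pow_succ, show r-(e+1)+1 = r-e from by omega]
end

lemma delta_pos (α : ℝ) (r e n : ℕ) (hd : e+1 ≤ r) (hre : r ≤ 2*e)
    (hα0 : 0 < α) (hα1 : α < 1) (hαE : α * ((r:ℝ) - e) < (1-α) * (e+1)) :
    0 < (fpoly α r n).coeff (n+e) - (fpoly α r n).coeff (n+e+1) := by
  have hdec : (fpoly α r n).coeff (n+e) - (fpoly α r n).coeff (n+e+1)
      = ∑ k ∈ Finset.range (n+1), ((n.choose k : ℝ) * ((1-2*α)^2)^k * (α*(1-α))^(n-k))
          * ∑ t ∈ Finset.range (e+1), (vco α r (e-t) - vco α r (e+1+t)) * Dr (n-k) t := by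
    have d1 := fpoly_coeff_decomp α r n e
    have d2 := fpoly_coeff_decomp α r n (e+1)
    rw [show n+(e+1) = n+e+1 from by omega] at d2
    simp only [show ∀ m:ℕ, m+(e+1) = m+e+1 from fun m => by omega] at d2
    rw [d1, d2, ← Finset.sum_sub_distrib]
    apply Finset.sum_congr rfl
    intro k _
    rw [← mul_sub, Wdiff α r e (n-k) hre]
  rw [hdec]
  have hβ : (0:ℝ) < 1 - α := by linarith
  have hsum_nonneg : ∀ k, 0 ≤ ∑ t ∈ Finset.range (e+1), (vco α r (e-t) - vco α r (e+1+t)) * Dr (n-k) t := by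
    intro k
    apply Finset.sum_nonneg
    intro t ht
    rw [Finset.mem_range] at ht
    exact mul_nonneg (sub_nonneg.2 (vco_le α r e hd hre hα0 hα1 hαE.le t (by omega))) (Dr_nonneg _ _)
  apply Finset.sum_pos'
  · intro k _
    apply mul_nonneg _ (hsum_nonneg k)
    apply mul_nonneg (mul_nonneg (by positivity) (by positivity))
    apply pow_nonneg
    nlinarith
  · refine ⟨0, Finset.mem_range.2 (by omega), ?_⟩
    apply mul_pos
    · simp only [Nat.choose_zero_right, Nat.cast_one, pow_zero, one_mul, Nat.sub_zero]
      apply pow_pos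
      nlinarith
    · simp only [Nat.sub_zero]
      apply Finset.sum_pos'
      · intro t ht
        rw [Finset.mem_range] at ht
        exact mul_nonneg (sub_nonneg.2 (vco_le α r e hd hre hα0 hα1 hαE.le t (by omega))) (Dr_nonneg _ _)
      · refine ⟨0, Finset.mem_range.2 (by omega), ?_⟩
        apply mul_pos _ (Dr_pos n)
        rw [sub_pos]
        simpa using vco_lt α r e hd hα0 hα1 hαE

theorem competeProb_increasing_small_alpha (r d : ℕ) (hd : 1 ≤ d) (hdr : d ≤ r) (hrd : r ≤ 2 * d - 2)
    (α : ℝ) (hα0 : 0 < α) (hα : α < (d : ℝ) / (r + 1)) :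
    ∀ n : ℕ, competeProb α r d n < competeProb α r d (n + 1) := by
  intro n
  obtain ⟨e, rfl⟩ : ∃ e, d = e + 1 := ⟨d - 1, by omega⟩
  have hre : r ≤ 2 * e := by omega
  have hrpos : (0:ℝ) < (r:ℝ) + 1 := by positivity
  rw [lt_div_iff₀ hrpos] at hα
  have hα' : α * ((r:ℝ) + 1) < (e:ℝ) + 1 := by
    have : ((e+1 : ℕ):ℝ) = (e:ℝ)+1 := by push_cast; ring
    rw [this] at hα
    exact hα
  have her : (e:ℝ) + 1 ≤ (r:ℝ) + 1 := by
    have h' : ((e:ℝ)+1) ≤ (r:ℝ) := by exact_mod_cast hdr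
    linarith
  have hα1 : α < 1 := by nlinarith
  have hαE : α * ((r:ℝ) - e) < (1-α) * ((e:ℝ)+1) := by nlinarith
  rw [step_eq α r e n hdr]
  have hΔ := delta_pos α r e n hdr hre hα0 hα1 hαE
  have hαβ : (0:ℝ) < α * (1-α) := by nlinarith
  nlinarith [mul_pos hαβ hΔ]
end

section
/- For all positive integers r, d with d ≤ r, every α ∈ (0,1), and every nonnegative integer n, the duality relation p_n^{r,d}(α) = 1 − p_n^{r, r−d+1}(1−α) holds, where p_n^{r,d}(α) denotes the competing probability with success probability α. -/
open Finset Filter Topology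

theorem competeProb_duality (r d : ℕ) (hd : 1 ≤ d) (hdr : d ≤ r) (α : ℝ)
    (hα0 : 0 < α) (hα1 : α < 1) (n : ℕ) :
    competeProb α r d n = 1 - competeProb (1 - α) r (r - d + 1) n := by
  set T : ℕ → ℕ → ℝ := fun i j =>
    ((n + r).choose j : ℝ) * (n.choose i : ℝ) * α ^ (i + j) * (1 - α) ^ (2 * n + r - i - j)
    with hT
  -- the total sum over all (i, j) is 1
  have hb : ∀ m : ℕ, ∑ k ∈ Finset.range (m + 1),
      (m.choose k : ℝ) * α ^ k * (1 - α) ^ (m - k) = 1 := by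
    intro m
    have h := add_pow α (1 - α) m
    have h1 : α + (1 - α) = 1 := by ring
    rw [h1, one_pow] at h
    calc ∑ k ∈ Finset.range (m + 1), (m.choose k : ℝ) * α ^ k * (1 - α) ^ (m - k)
        = ∑ k ∈ Finset.range (m + 1), α ^ k * (1 - α) ^ (m - k) * (m.choose k : ℝ) := by
          exact Finset.sum_congr rfl (fun k _ => by ring)
      _ = 1 := h.symm
  have total : ∑ i ∈ Finset.range (n + 1), ∑ j ∈ Finset.range (n + r + 1), T i j = 1 := by
    have h1 : ∀ i ∈ Finset.range (n + 1), ∀ j ∈ Finset.range (n + r + 1),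
        T i j = ((n.choose i : ℝ) * α ^ i * (1 - α) ^ (n - i)) *
          (((n + r).choose j : ℝ) * α ^ j * (1 - α) ^ (n + r - j)) := by
      intro i hi j hj
      simp only [Finset.mem_range] at hi hj
      have he1 : 2 * n + r - i - j = (n - i) + (n + r - j) := by omega
      have he2 : i + j = i + j := rfl
      rw [hT]
      simp only
      rw [he1, pow_add, pow_add]
      ring
    rw [Finset.sum_congr rfl (fun i hi => Finset.sum_congr rfl (h1 i hi)),
      ← Finset.sum_mul_sum, hb n, hb (n + r), one_mul]
  -- split the inner sum
  have split : ∀ i ∈ Finset.range (n + 1),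
      ∑ j ∈ Finset.range (n + r + 1), T i j =
        (∑ j ∈ Finset.range (i + d), T i j) + ∑ j ∈ Finset.Icc (i + d) (n + r), T i j := by
    intro i hi
    simp only [Finset.mem_range] at hi
    rw [Finset.range_eq_Ico, ← Finset.Ico_add_one_right_eq_Icc,
      ← Finset.sum_Ico_consecutive _ (Nat.zero_le (i + d)) (by omega : i + d ≤ n + r + 1),
      ← Finset.range_eq_Ico]
  have htot2 : (∑ i ∈ Finset.range (n + 1), ∑ j ∈ Finset.range (i + d), T i j)
      + competeProb α r d n = 1 := by
    rw [competeProb, ← Finset.sum_add_distrib]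
    rw [← Finset.sum_congr rfl split]
    exact total
  -- identify the lower part with the dual probability
  have dual : competeProb (1 - α) r (r - d + 1) n
      = ∑ i ∈ Finset.range (n + 1), ∑ j ∈ Finset.range (i + d), T i j := by
    rw [competeProb]
    have hsub : (1 : ℝ) - (1 - α) = α := by ring
    rw [← Finset.sum_range_reflect]
    apply Finset.sum_congr rfl
    intro i hi
    simp only [Finset.mem_range] at hi
    have hin : i ≤ n := by omega
    have hrefl : n + 1 - 1 - i = n - i := by omega
    rw [hrefl]
    symm
    apply Finset.sum_nbij' (fun j => n + r - j) (fun j => n + r - j)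
    · intro j hj
      simp only [Finset.mem_range] at hj
      simp only [Finset.mem_Icc]
      omega
    · intro j hj
      simp only [Finset.mem_Icc] at hj
      simp only [Finset.mem_range]
      omega
    · intro j hj
      simp only [Finset.mem_range] at hj
      omega
    · intro j hj
      simp only [Finset.mem_Icc] at hj
      omega
    · intro j hj
      simp only [Finset.mem_range] at hj
      rw [hT, hsub]
      simp only
      have hc1 : (n + r).choose (n + r - j) = (n + r).choose j :=
        Nat.choose_symm (by omega)
      have hc2 : n.choose (n - i) = n.choose i := Nat.choose_symm hin
      have he1 : n - i + (n + r - j) = 2 * n + r - i - j := by omega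
      have he2 : 2 * n + r - (n - i) - (n + r - j) = i + j := by omega
      rw [hc1, hc2, he1, he2]
      ring
  rw [dual]
  linarith [htot2]
end

section
/- For every α ∈ (0,1), all positive integers r, d, and every nonnegative integer n, p_{n+1}^{r,d} − p_n^{r,d} = α(1−α) Σ_{i=0}^{r} P(S_r = i) ( q_n^{(i−d+1)} − q_n^{(i−d)} ), where P(S_r = i) = C(r,i) α^i (1−α)^{r−i} and q_n^{(k)} = P(S'_n − S_n = k) for independent binomial variables S_n, S'_n with n trials and success probability α. -/
open Finset Filter Topology

/-- The binomial probability `P(S_r = i) = C(r,i) α^i (1-α)^(r-i)`. -/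
noncomputable def binomProb (α : ℝ) (r i : ℕ) : ℝ :=
  (r.choose i : ℝ) * α ^ i * (1 - α) ^ (r - i)

/-- `q α n k = P(S'_n - S_n = k)` for independent binomials `S_n, S'_n` with `n`
trials and success probability `α`, given by its explicit combinatorial formula
(it depends on `k` only through `|k|`). -/
noncomputable def diffProb (α : ℝ) (n : ℕ) (k : ℤ) : ℝ :=
  ∑ i ∈ Finset.range (n - k.natAbs + 1),
    (n.choose i : ℝ) * (n.choose (i + k.natAbs) : ℝ) * α ^ (2 * i + k.natAbs) *
      (1 - α) ^ (2 * n - 2 * i - k.natAbs)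

namespace CompeteAux


noncomputable def B (α : ℝ) (N j : ℕ) : ℝ := (N.choose j : ℝ) * α ^ j * (1 - α) ^ (N - j)

lemma B_succ_self (α : ℝ) (N : ℕ) : B α N (N + 1) = 0 := by
  simp [B, Nat.choose_succ_self]

lemma bstep (α : ℝ) (N : ℕ) (g : ℕ → ℝ) :
    ∑ j ∈ range (N + 1 + 1), B α (N + 1) j * g j
      = (1 - α) * ∑ j ∈ range (N + 1), B α N j * g j
        + α * ∑ j ∈ range (N + 1), B α N j * g (j + 1) := by
  have key : ∑ j ∈ range (N + 1), B α N j * g j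
      = ∑ j ∈ range (N + 1), B α N (j + 1) * g (j + 1) + B α N 0 * g 0 := by
    rw [← Finset.sum_range_succ' (fun j => B α N j * g j) (N + 1)]
    rw [Finset.sum_range_succ (fun j => B α N j * g j) (N + 1)]
    rw [B_succ_self, zero_mul, add_zero]
  rw [Finset.sum_range_succ' (fun j => B α (N + 1) j * g j) (N + 1), key]
  have h1 : ∀ j ∈ range (N + 1), B α (N + 1) (j + 1) * g (j + 1)
      = α * (B α N j * g (j + 1)) + (1 - α) * (B α N (j + 1) * g (j + 1)) := by
    intro j hj
    simp only [mem_range] at hj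
    unfold B
    rw [Nat.choose_succ_succ]
    rcases Nat.lt_or_ge j N with h | h
    · rw [show N + 1 - (j + 1) = N - j by omega, show N - j = (N - (j + 1)) + 1 by omega]
      push_cast
      ring
    · have hN : N.choose (j + 1) = 0 := Nat.choose_eq_zero_of_lt (by omega)
      rw [hN, show N + 1 - (j + 1) = 0 by omega, show N - j = 0 by omega]
      push_cast
      ring
  rw [Finset.sum_congr rfl h1, Finset.sum_add_distrib, ← Finset.mul_sum, ← Finset.mul_sum]
  have h0 : B α (N + 1) 0 = (1 - α) * B α N 0 := by
    unfold B
    simp [pow_succ]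
    ring
  rw [h0]
  ring

noncomputable def W (α : ℝ) (N n : ℕ) (f : ℤ → ℝ) : ℝ :=
  ∑ j ∈ range (N + 1), B α N j * ∑ i ∈ range (n + 1), B α n i * f ((j : ℤ) - (i : ℤ))

lemma W_congr (α : ℝ) (N n : ℕ) {f g : ℤ → ℝ} (h : ∀ t, f t = g t) :
    W α N n f = W α N n g := by
  unfold W
  simp only [h]

lemma Wcomm (α : ℝ) (N n : ℕ) (f : ℤ → ℝ) :
    W α N n f = ∑ i ∈ range (n + 1), B α n i * ∑ j ∈ range (N + 1), B α N j * f ((j : ℤ) - (i : ℤ)) := by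
  unfold W
  simp only [Finset.mul_sum]
  rw [Finset.sum_comm]
  exact Finset.sum_congr rfl fun i _ => Finset.sum_congr rfl fun j _ => by ring

lemma WN_succ (α : ℝ) (N n : ℕ) (f : ℤ → ℝ) :
    W α (N + 1) n f = (1 - α) * W α N n f + α * W α N n (fun t => f (t + 1)) := by
  unfold W
  rw [bstep α N (fun j => ∑ i ∈ range (n + 1), B α n i * f ((j : ℤ) - (i : ℤ)))]
  congr 2
  refine Finset.sum_congr rfl fun j _ => ?_
  congr 1
  refine Finset.sum_congr rfl fun i _ => ?_
  congr 1
  push_cast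
  ring

lemma Wn_succ (α : ℝ) (N n : ℕ) (f : ℤ → ℝ) :
    W α N (n + 1) f = (1 - α) * W α N n f + α * W α N n (fun t => f (t - 1)) := by
  rw [Wcomm, Wcomm, Wcomm]
  rw [bstep α n (fun i => ∑ j ∈ range (N + 1), B α N j * f ((j : ℤ) - (i : ℤ)))]
  congr 2
  refine Finset.sum_congr rfl fun i _ => ?_
  congr 1
  refine Finset.sum_congr rfl fun j _ => ?_
  congr 1
  push_cast
  ring

lemma Wsub (α : ℝ) (N n : ℕ) (f g : ℤ → ℝ) :
    W α N n f - W α N n g = W α N n (fun t => f t - g t) := by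
  unfold W
  rw [← Finset.sum_sub_distrib]
  refine Finset.sum_congr rfl fun j _ => ?_
  rw [← mul_sub, ← Finset.sum_sub_distrib]
  congr 1
  refine Finset.sum_congr rfl fun i _ => ?_
  ring

lemma Wswap (α : ℝ) (n : ℕ) (f : ℤ → ℝ) :
    W α n n (fun t => f (-t)) = W α n n f := by
  unfold W
  simp only [Finset.mul_sum]
  rw [Finset.sum_comm]
  refine Finset.sum_congr rfl fun i _ => Finset.sum_congr rfl fun j _ => ?_
  rw [show -((j : ℤ) - (i : ℤ)) = (i : ℤ) - (j : ℤ) by ring]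
  ring



lemma Wconv (α : ℝ) (n : ℕ) : ∀ (r : ℕ) (f : ℤ → ℝ),
    W α (n + r) n f = ∑ i ∈ range (r + 1), B α r i * W α n n (fun t => f (t + (i : ℤ))) := by
  intro r
  induction r with
  | zero =>
    intro f
    rw [Finset.sum_range_one]
    have hB : B α 0 0 = 1 := by simp [B]
    rw [hB, one_mul, Nat.add_zero]
    exact W_congr α n n fun t => by norm_num
  | succ r ih =>
    intro f
    rw [show n + (r + 1) = n + r + 1 by omega, WN_succ α (n + r) n f, ih f, ih (fun t => f (t + 1)),
      bstep α r (fun i => W α n n (fun t => f (t + (i : ℤ))))]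
    congr 1
    congr 1
    refine Finset.sum_congr rfl fun i _ => ?_
    congr 1
    refine W_congr α n n fun t => ?_
    congr 1
    push_cast
    ring

lemma Wind_nat (α : ℝ) (n m : ℕ) :
    W α n n (fun t => if t = (m : ℤ) then 1 else 0)
      = ∑ i ∈ range (n - m + 1),
          (n.choose i : ℝ) * (n.choose (i + m) : ℝ) * α ^ (2 * i + m) * (1 - α) ^ (2 * n - 2 * i - m) := by
  rw [Wcomm]
  have h1 : ∀ i ∈ range (n + 1),
      B α n i * ∑ j ∈ range (n + 1), B α n j * (if (j : ℤ) - (i : ℤ) = (m : ℤ) then (1 : ℝ) else 0)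
        = if i + m ≤ n then B α n i * B α n (i + m) else 0 := by
    intro i _
    have h2 : ∀ j ∈ range (n + 1), B α n j * (if (j : ℤ) - (i : ℤ) = (m : ℤ) then (1 : ℝ) else 0)
        = if j = i + m then B α n j else 0 := by
      intro j _
      by_cases h : j = i + m
      · rw [if_pos (by omega), if_pos h, mul_one]
      · rw [if_neg (by omega), if_neg h, mul_zero]
    rw [Finset.sum_congr rfl h2, Finset.sum_ite_eq' (range (n + 1)) (i + m) (B α n)]
    by_cases h : i + m ≤ n
    · rw [if_pos (by simp only [mem_range]; omega), if_pos h]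
    · rw [if_neg (by simp only [mem_range]; omega), if_neg h, mul_zero]
  rw [Finset.sum_congr rfl h1, ← Finset.sum_filter]
  rw [Finset.sum_subset (by intro x hx; simp only [mem_filter, mem_range] at hx ⊢; omega :
        (range (n + 1)).filter (fun i => i + m ≤ n) ⊆ range (n - m + 1))
      (by
        intro x hx hnx
        simp only [mem_range] at hx
        simp only [mem_filter, mem_range] at hnx
        have hb : n < x + m := by omega
        unfold B
        rw [Nat.choose_eq_zero_of_lt hb]
        simp)]
  refine Finset.sum_congr rfl fun i hi => ?_
  simp only [mem_range] at hi
  by_cases h : i + m ≤ n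
  · unfold B
    rw [show 2 * i + m = i + (i + m) by omega, show 2 * n - 2 * i - m = (n - i) + (n - (i + m)) by omega,
      pow_add, pow_add]
    ring
  · rw [Nat.choose_eq_zero_of_lt (show n < i + m by omega)]
    unfold B
    rw [Nat.choose_eq_zero_of_lt (show n < i + m by omega)]
    simp

noncomputable def ind (c : ℤ) : ℤ → ℝ := fun t => if t = c then 1 else 0
noncomputable def chi (c : ℤ) : ℤ → ℝ := fun t => if c ≤ t then 1 else 0

lemma diffProb_abs (α : ℝ) (n : ℕ) (k k' : ℤ) (h : k.natAbs = k'.natAbs) :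
    diffProb α n k = diffProb α n k' := by
  unfold diffProb
  rw [h]

lemma diffProb_eq_W (α : ℝ) (n : ℕ) (k : ℤ) :
    diffProb α n k = W α n n (ind k) := by
  have habs : ∀ m : ℕ, diffProb α n (m : ℤ) = W α n n (ind (m : ℤ)) := by
    intro m
    unfold diffProb ind
    rw [Wind_nat α n m]
    simp
  rcases Int.natAbs_eq k with h | h
  · rw [h, habs]
  · rw [h]
    rw [diffProb_abs α n (-(k.natAbs : ℤ)) ((k.natAbs : ℤ)) (by omega), habs]
    rw [← Wswap α n (ind (-(k.natAbs : ℤ)))]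
    refine W_congr α n n fun t => ?_
    unfold ind
    exact if_congr (by omega) rfl rfl



lemma compete_eq_W (α : ℝ) (r d n : ℕ) :
    competeProb α r d n = W α (n + r) n (chi (d : ℤ)) := by
  rw [Wcomm]
  unfold competeProb
  refine Finset.sum_congr rfl fun i hi => ?_
  simp only [mem_range] at hi
  have h2 : ∀ j ∈ range (n + r + 1),
      B α (n + r) j * chi (d : ℤ) ((j : ℤ) - (i : ℤ))
        = if i + d ≤ j then B α (n + r) j else 0 := by
    intro j _
    unfold chi
    by_cases h : i + d ≤ j
    · rw [if_pos (by omega), if_pos h, mul_one]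
    · rw [if_neg (by omega), if_neg h, mul_zero]
  rw [Finset.sum_congr rfl h2, ← Finset.sum_filter, Finset.mul_sum]
  rw [show (range (n + r + 1)).filter (fun j => i + d ≤ j) = Finset.Icc (i + d) (n + r) by
    ext x
    simp only [mem_filter, mem_range, mem_Icc]
    omega]
  refine Finset.sum_congr rfl fun j hj => ?_
  simp only [mem_Icc] at hj
  unfold B
  rw [show i + j = j + i by ring, show 2 * n + r - i - j = (n + r - j) + (n - i) by omega,
    pow_add, pow_add]
  ring

lemma Wstepn_chi (α : ℝ) (N n : ℕ) (c : ℤ) :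
    W α N (n + 1) (chi c) = (1 - α) * W α N n (chi c) + α * W α N n (chi (c + 1)) := by
  rw [Wn_succ]
  congr 2
  refine W_congr α N n fun t => ?_
  unfold chi
  exact if_congr (by omega) rfl rfl

lemma WstepN_chi (α : ℝ) (N n : ℕ) (c : ℤ) :
    W α (N + 1) n (chi c) = (1 - α) * W α N n (chi c) + α * W α N n (chi (c - 1)) := by
  rw [WN_succ]
  congr 2
  refine W_congr α N n fun t => ?_
  unfold chi
  exact if_congr (by omega) rfl rfl

lemma Wchi_sub (α : ℝ) (N n : ℕ) (c : ℤ) :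
    W α N n (chi c) - W α N n (chi (c + 1)) = W α N n (ind c) := by
  rw [Wsub]
  refine W_congr α N n fun t => ?_
  unfold chi ind
  split_ifs <;> first | (exfalso; omega) | norm_num

lemma Wconv_ind (α : ℝ) (n r : ℕ) (c : ℤ) :
    W α (n + r) n (ind c) = ∑ i ∈ range (r + 1), B α r i * W α n n (ind (c - (i : ℤ))) := by
  rw [Wconv]
  refine Finset.sum_congr rfl fun i _ => ?_
  congr 1
  refine W_congr α n n fun t => ?_
  unfold ind
  exact if_congr (by omega) rfl rfl


end CompeteAux

open CompeteAux

theorem competeProb_one_step_back (α : ℝ) (hα : α ∈ Set.Ioo (0 : ℝ) 1)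
    (r d : ℕ) (hr : 1 ≤ r) (hd : 1 ≤ d) (n : ℕ) :
    competeProb α r d (n + 1) - competeProb α r d n =
      α * (1 - α) * ∑ i ∈ Finset.range (r + 1),
        binomProb α r i *
          (diffProb α n ((i : ℤ) - d + 1) - diffProb α n ((i : ℤ) - d)) := by
  have key1 : competeProb α r d (n + 1)
      = (1 - α) * ((1 - α) * W α (n + r) n (chi (d : ℤ)) + α * W α (n + r) n (chi ((d : ℤ) - 1)))
        + α * ((1 - α) * W α (n + r) n (chi ((d : ℤ) + 1)) + α * W α (n + r) n (chi (d : ℤ))) := by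
    rw [compete_eq_W α r d (n + 1), show n + 1 + r = n + r + 1 by omega,
      Wstepn_chi, WstepN_chi, WstepN_chi, show (d : ℤ) + 1 - 1 = (d : ℤ) by ring]
  have key2 : competeProb α r d n = W α (n + r) n (chi (d : ℤ)) := compete_eq_W α r d n
  have key3 : ∑ i ∈ Finset.range (r + 1),
        binomProb α r i *
          (diffProb α n ((i : ℤ) - d + 1) - diffProb α n ((i : ℤ) - d))
      = (W α (n + r) n (chi ((d : ℤ) - 1)) - W α (n + r) n (chi (d : ℤ)))
        - (W α (n + r) n (chi (d : ℤ)) - W α (n + r) n (chi ((d : ℤ) + 1))) := by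
    have e1 : ∑ i ∈ Finset.range (r + 1),
        binomProb α r i *
          (diffProb α n ((i : ℤ) - d + 1) - diffProb α n ((i : ℤ) - d))
        = ∑ i ∈ Finset.range (r + 1),
            B α r i * (W α n n (ind ((d : ℤ) - 1 - (i : ℤ))) - W α n n (ind ((d : ℤ) - (i : ℤ)))) := by
      refine Finset.sum_congr rfl fun i _ => ?_
      rw [show binomProb α r i = B α r i from rfl,
        diffProb_abs α n ((i : ℤ) - d + 1) ((d : ℤ) - 1 - (i : ℤ)) (by omega),
        diffProb_abs α n ((i : ℤ) - d) ((d : ℤ) - (i : ℤ)) (by omega),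
        diffProb_eq_W, diffProb_eq_W]
    rw [e1]
    have e2 : ∑ i ∈ Finset.range (r + 1),
        B α r i * (W α n n (ind ((d : ℤ) - 1 - (i : ℤ))) - W α n n (ind ((d : ℤ) - (i : ℤ))))
        = (∑ i ∈ Finset.range (r + 1), B α r i * W α n n (ind ((d : ℤ) - 1 - (i : ℤ))))
          - ∑ i ∈ Finset.range (r + 1), B α r i * W α n n (ind ((d : ℤ) - (i : ℤ))) := by
      rw [← Finset.sum_sub_distrib]
      exact Finset.sum_congr rfl fun i _ => by ring
    rw [e2, ← Wconv_ind α n r ((d : ℤ) - 1), ← Wconv_ind α n r (d : ℤ),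
      ← Wchi_sub α (n + r) n ((d : ℤ) - 1), ← Wchi_sub α (n + r) n (d : ℤ),
      show (d : ℤ) - 1 + 1 = (d : ℤ) by ring]
  rw [key1, key2, key3]
  ring
end

section
/- For every α ∈ (0,1) and every positive integer n, the sequence q_n^{(i)} = P(S'_n − S_n = i) satisfies q_n^{(−i)} = q_n^{(i)} for all integers i, and is strictly decreasing in i for 0 ≤ i ≤ n: q_n^{(i)} > q_n^{(i+1)} for all 0 ≤ i ≤ n. -/
open Finset Filter Topology

noncomputable def bpp (α : ℝ) (n i : ℕ) : ℝ := (n.choose i : ℝ) * α ^ i * (1 - α) ^ (n - i)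

noncomputable def Qd (α : ℝ) (n k : ℕ) : ℝ :=
  ∑ i ∈ Finset.range (n + 1), bpp α n i * bpp α n (i + k)

lemma bpp_zero (α : ℝ) {n i : ℕ} (h : n < i) : bpp α n i = 0 := by
  simp [bpp, Nat.choose_eq_zero_of_lt h]

lemma bpp_pascal (α : ℝ) (n i : ℕ) :
    bpp α (n + 1) (i + 1) = α * bpp α n i + (1 - α) * bpp α n (i + 1) := by
  unfold bpp
  rcases lt_trichotomy i n with h | h | h
  · have h1 : n + 1 - (i + 1) = n - (i + 1) + 1 := by omega
    have h2 : n - i = n - (i + 1) + 1 := by omega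
    rw [Nat.choose_succ_succ, h1, h2]
    push_cast
    ring
  · subst h
    simp [Nat.choose_succ_succ]
    ring
  · rw [Nat.choose_eq_zero_of_lt (show n + 1 < i + 1 by omega),
      Nat.choose_eq_zero_of_lt h, Nat.choose_eq_zero_of_lt (by omega)]
    ring

lemma bpp_zero_succ (α : ℝ) (n : ℕ) : bpp α (n + 1) 0 = (1 - α) * bpp α n 0 := by
  simp [bpp, pow_succ]
  ring

lemma Qd_zero_of_lt (α : ℝ) {n k : ℕ} (h : n < k) : Qd α n k = 0 :=
  Finset.sum_eq_zero fun i _ => by rw [bpp_zero α (show n < i + k by omega)]; ring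

lemma Qd_shift (α : ℝ) (n j : ℕ) :
    ∑ i ∈ Finset.range (n + 1), bpp α n (i + 1) * bpp α n (i + 1 + j)
      = Qd α n j - bpp α n 0 * bpp α n j := by
  have h1 : ∑ i ∈ Finset.range (n + 2), bpp α n i * bpp α n (i + j) = Qd α n j := by
    rw [Finset.sum_range_succ]
    rw [bpp_zero α (show n < n + 1 by omega)]
    simp [Qd]
  rw [Finset.sum_range_succ'] at h1
  simp only [zero_add] at h1
  linarith

lemma Qd_rec (α : ℝ) (n m : ℕ) :
    Qd α (n + 1) (m + 1) = (α ^ 2 + (1 - α) ^ 2) * Qd α n (m + 1)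
      + α * (1 - α) * (Qd α n m + Qd α n (m + 1 + 1)) := by
  have expand : ∀ i ∈ Finset.range (n + 1),
      bpp α (n + 1) (i + 1) * bpp α (n + 1) (i + 1 + (m + 1))
      = α ^ 2 * (bpp α n i * bpp α n (i + (m + 1)))
        + α * (1 - α) * (bpp α n i * bpp α n (i + (m + 1 + 1)))
        + α * (1 - α) * (bpp α n (i + 1) * bpp α n (i + 1 + m))
        + (1 - α) ^ 2 * (bpp α n (i + 1) * bpp α n (i + 1 + (m + 1))) := by
    intro i _
    simp only [show i + (m + 1) = i + 1 + m from by omega,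
      show i + (m + 1 + 1) = i + 1 + m + 1 from by omega,
      show i + 1 + (m + 1) = i + 1 + m + 1 from by omega]
    rw [bpp_pascal α n i, bpp_pascal α n (i + 1 + m)]
    ring
  have hQ : Qd α (n + 1) (m + 1)
      = bpp α (n + 1) 0 * bpp α (n + 1) (0 + (m + 1))
        + ∑ i ∈ Finset.range (n + 1),
            bpp α (n + 1) (i + 1) * bpp α (n + 1) (i + 1 + (m + 1)) := by
    rw [Qd, Finset.sum_range_succ']
    ring
  rw [hQ, Finset.sum_congr rfl expand]
  simp only [Finset.sum_add_distrib, ← Finset.mul_sum]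
  have s1 : ∑ i ∈ Finset.range (n + 1), bpp α n i * bpp α n (i + (m + 1)) = Qd α n (m + 1) := rfl
  have s2 : ∑ i ∈ Finset.range (n + 1), bpp α n i * bpp α n (i + (m + 1 + 1)) = Qd α n (m + 1 + 1) := rfl
  rw [s1, s2, Qd_shift, Qd_shift, zero_add, bpp_zero_succ]
  have e0 : m + 1 = m + 1 := rfl
  rw [show (m : ℕ) + 1 = m + 1 from rfl, bpp_pascal α n m]
  ring

lemma Qd_rec0 (α : ℝ) (n : ℕ) :
    Qd α (n + 1) 0 = (α ^ 2 + (1 - α) ^ 2) * Qd α n 0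
      + 2 * (α * (1 - α)) * Qd α n 1 := by
  have expand : ∀ i ∈ Finset.range (n + 1),
      bpp α (n + 1) (i + 1) * bpp α (n + 1) (i + 1 + 0)
      = α ^ 2 * (bpp α n i * bpp α n (i + 0))
        + 2 * (α * (1 - α)) * (bpp α n i * bpp α n (i + 1))
        + (1 - α) ^ 2 * (bpp α n (i + 1) * bpp α n (i + 1 + 0)) := by
    intro i _
    simp only [Nat.add_zero]
    rw [bpp_pascal α n i]
    ring
  have hQ : Qd α (n + 1) 0
      = bpp α (n + 1) 0 * bpp α (n + 1) (0 + 0)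
        + ∑ i ∈ Finset.range (n + 1),
            bpp α (n + 1) (i + 1) * bpp α (n + 1) (i + 1 + 0) := by
    rw [Qd, Finset.sum_range_succ']
    ring
  rw [hQ, Finset.sum_congr rfl expand]
  simp only [Finset.sum_add_distrib, ← Finset.mul_sum]
  have s0 : ∑ i ∈ Finset.range (n + 1), bpp α n i * bpp α n (i + 0) = Qd α n 0 := rfl
  have s1 : ∑ i ∈ Finset.range (n + 1), bpp α n i * bpp α n (i + 1) = Qd α n 1 := rfl
  rw [s0, s1, Qd_shift α n 0, show (0 : ℕ) + 0 = 0 from rfl, bpp_zero_succ]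
  ring

lemma Qd_anti (α : ℝ) (h0 : 0 < α) (h1 : α < 1) :
    ∀ n, 1 ≤ n → ∀ k, k ≤ n → Qd α n (k + 1) < Qd α n k := by
  intro n hn
  induction n, hn using Nat.le_induction with
  | base =>
    intro k hk
    have q0 : Qd α 1 0 = (1 - α) ^ 2 + α ^ 2 := by
      simp [Qd, bpp, Finset.sum_range_succ]
      try ring
    have q1 : Qd α 1 1 = (1 - α) * α := by
      simp [Qd, bpp, Finset.sum_range_succ]
      try ring
    interval_cases k
    · rw [q0, q1]
      nlinarith [sq_nonneg (2 * α - 1)]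
    · rw [q1, Qd_zero_of_lt α (show 1 < 2 by omega)]
      nlinarith
  | succ n hn IH =>
    have weak : ∀ k, Qd α n (k + 1) ≤ Qd α n k := by
      intro k
      rcases le_or_gt k n with h | h
      · exact (IH k h).le
      · rw [Qd_zero_of_lt α h, Qd_zero_of_lt α (show n < k + 1 by omega)]
    have hβ : 0 < α * (1 - α) := by nlinarith
    have hc : (0 : ℝ) < α ^ 2 + (1 - α) ^ 2 := by positivity
    have hcb : (0 : ℝ) < α ^ 2 + (1 - α) ^ 2 - α * (1 - α) := by
      nlinarith [sq_nonneg (2 * α - 1)]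
    intro k hk
    match k with
    | 0 =>
      rw [Qd_rec0, show (0 : ℕ) + 1 = 0 + 1 from rfl, Qd_rec α n 0]
      have s1 := IH 0 (by omega)
      have s2 := weak (0 + 1)
      simp only [Nat.zero_add] at *
      nlinarith [mul_pos hcb (sub_pos.2 s1), mul_nonneg hβ.le (sub_nonneg.2 s2)]
    | m + 1 =>
      rw [Qd_rec α n m, Qd_rec α n (m + 1)]
      have s1 := IH m (by omega)
      have s2 := weak (m + 1)
      have s3 := weak (m + 1 + 1)
      nlinarith [mul_pos hβ (sub_pos.2 s1), mul_nonneg hc.le (sub_nonneg.2 s2),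
        mul_nonneg hβ.le (sub_nonneg.2 s3)]


lemma diffProb_eq_Qd (α : ℝ) (n : ℕ) (k : ℤ) : diffProb α n k = Qd α n k.natAbs := by
  set m := k.natAbs with hm
  rcases le_or_gt m n with h | h
  · have hsub : ∑ i ∈ Finset.range (n - m + 1), bpp α n i * bpp α n (i + m) = Qd α n m := by
      apply Finset.sum_subset (Finset.range_subset_range.2 (show n - m + 1 ≤ n + 1 by omega))
      intro i hi1 hi2
      simp only [Finset.mem_range] at hi1 hi2
      rw [bpp_zero α (show n < i + m by omega)]
      ring
    rw [← hsub]
    unfold diffProb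
    rw [← hm]
    apply Finset.sum_congr rfl
    intro i hi
    have hi' : i ≤ n - m := by
      simp only [Finset.mem_range, Nat.lt_succ_iff] at hi
      exact hi
    unfold bpp
    have e2 : α ^ i * α ^ (i + m) = α ^ (2 * i + m) := by
      rw [← pow_add]; congr 1; omega
    have e3 : (1 - α) ^ (n - i) * (1 - α) ^ (n - (i + m)) = (1 - α) ^ (2 * n - 2 * i - m) := by
      rw [← pow_add]; congr 1; omega
    calc (n.choose i : ℝ) * (n.choose (i + m) : ℝ) * α ^ (2 * i + m)
          * (1 - α) ^ (2 * n - 2 * i - m)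
        = (n.choose i : ℝ) * (n.choose (i + m) : ℝ) * (α ^ i * α ^ (i + m))
          * ((1 - α) ^ (n - i) * (1 - α) ^ (n - (i + m))) := by rw [e2, e3]
      _ = (n.choose i : ℝ) * α ^ i * (1 - α) ^ (n - i)
          * ((n.choose (i + m) : ℝ) * α ^ (i + m) * (1 - α) ^ (n - (i + m))) := by ring
  · rw [Qd_zero_of_lt α h]
    unfold diffProb
    rw [← hm, show n - m = 0 by omega]
    simp [Nat.choose_eq_zero_of_lt h]

theorem diffProb_symm_and_strictAnti (α : ℝ) (hα : α ∈ Set.Ioo (0 : ℝ) 1)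
    (n : ℕ) (hn : 1 ≤ n) :
    (∀ i : ℤ, diffProb α n (-i) = diffProb α n i) ∧
    (∀ i : ℕ, i ≤ n → diffProb α n ((i : ℤ) + 1) < diffProb α n (i : ℤ)) := by
  constructor
  · intro i
    unfold diffProb
    rw [Int.natAbs_neg]
  · intro i hi
    rw [show ((i : ℤ) + 1) = ((i + 1 : ℕ) : ℤ) by push_cast; ring,
      diffProb_eq_Qd, diffProb_eq_Qd, Int.natAbs_natCast, Int.natAbs_natCast]
    exact Qd_anti α hα.1 hα.2 n hn i hi
end

section
/- For every α ∈ (0,1), all positive integers r, d, and every nonnegative integer n, p_{n+1}^{r,d} − p_n^{r,d} = −(4α(1−α)/π) ∫_0^1 Q_α(x)^n √(1 − x²) P̃_α^{r,d}(x) dx, where Q_α(x) = 1 − 4α(1−α)(1 − x²) and P̃_α^{r,d}(x) = Σ_{i=d}^{r} P(S_r = i) U_{2(i−d)}(x) − Σ_{i=0}^{d−1} P(S_r = i) U_{2(d−i−1)}(x), with U_k the Chebyshev polynomials of the second kind. -/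
open Finset Filter Topology Real

/-- `Q_α(x) = 1 - 4α(1-α)(1-x²)`. -/
noncomputable def Qa (α x : ℝ) : ℝ := 1 - 4 * α * (1 - α) * (1 - x ^ 2)

/-- `P̃_α^{r,d}(x) = Σ_{i=d}^r P(S_r = i) U_{2(i-d)}(x) - Σ_{i=0}^{d-1} P(S_r = i) U_{2(d-i-1)}(x)`,
where `U_k` are the Chebyshev polynomials of the second kind. -/
noncomputable def Pt (α : ℝ) (r d : ℕ) (x : ℝ) : ℝ :=
  ∑ i ∈ Finset.Icc d r, binomProb α r i *
      (Polynomial.Chebyshev.U ℝ (2 * ((i : ℤ) - d))).eval x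
    - ∑ i ∈ Finset.range d, binomProb α r i *
      (Polynomial.Chebyshev.U ℝ (2 * ((d : ℤ) - i - 1))).eval x

lemma intcos (m : ℤ) : ∫ θ in (0:ℝ)..(π/2), Real.cos (2*m*θ) = if m = 0 then π/2 else 0 := by
  rcases eq_or_ne m 0 with rfl | hm
  · simp
  · have h2 : (2*(m:ℝ)) ≠ 0 := by
      simp [Int.cast_ne_zero, hm]
    rw [intervalIntegral.integral_comp_mul_left _ h2, integral_cos]
    have : (2*(m:ℝ)) * (π/2) = m * π := by ring
    simp [this, Real.sin_int_mul_pi, hm]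

lemma cosmulcos (a b : ℝ) : Real.cos a * Real.cos b = (Real.cos (a+b) + Real.cos (a-b))/2 := by
  rw [Real.cos_add, Real.cos_sub]; ring

lemma sinmulsin (a b : ℝ) : Real.sin a * Real.sin b = (Real.cos (a-b) - Real.cos (a+b))/2 := by
  rw [Real.cos_add, Real.cos_sub]; ring

lemma ptE (p k : ℤ) (θ : ℝ) : Real.cos (2*p*θ) * (Real.sin ((2*k+1)*θ) * Real.sin θ)
    = (Real.cos (2*(p+(k:ℝ))*θ) + Real.cos (2*((p:ℝ)-k)*θ)
      - Real.cos (2*((p:ℝ)+k+1)*θ) - Real.cos (2*((p:ℝ)-k-1)*θ))/4 := by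
  rw [sinmulsin, show ((2*(k:ℝ)+1)*θ - θ) = 2*(k:ℝ)*θ by ring,
    show ((2*(k:ℝ)+1)*θ + θ) = (2*(k:ℝ)+2)*θ by ring]
  have e1 : Real.cos (2*(p:ℝ)*θ) * Real.cos (2*(k:ℝ)*θ)
      = (Real.cos (2*((p:ℝ)+k)*θ) + Real.cos (2*((p:ℝ)-k)*θ))/2 := by
    rw [cosmulcos, show (2*(p:ℝ)*θ + 2*(k:ℝ)*θ) = 2*((p:ℝ)+k)*θ by ring,
      show (2*(p:ℝ)*θ - 2*(k:ℝ)*θ) = 2*((p:ℝ)-k)*θ by ring]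
  have e2 : Real.cos (2*(p:ℝ)*θ) * Real.cos ((2*(k:ℝ)+2)*θ)
      = (Real.cos (2*((p:ℝ)+k+1)*θ) + Real.cos (2*((p:ℝ)-k-1)*θ))/2 := by
    rw [cosmulcos, show (2*(p:ℝ)*θ + (2*(k:ℝ)+2)*θ) = 2*((p:ℝ)+k+1)*θ by ring,
      show (2*(p:ℝ)*θ - (2*(k:ℝ)+2)*θ) = 2*((p:ℝ)-k-1)*θ by ring]
  linear_combination (e1 - e2)/2

lemma intgcos (c : ℝ) : IntervalIntegrable (fun θ : ℝ => Real.cos (c*θ)) MeasureTheory.volume 0 (π/2) := by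
  exact (Real.continuous_cos.comp (continuous_const.mul continuous_id)).intervalIntegrable _ _

lemma intE (p k : ℤ) : (∫ θ in (0:ℝ)..(π/2), Real.cos (2*p*θ) * (Real.sin ((2*k+1)*θ) * Real.sin θ))
    = ((if p+k = 0 then π/2 else (0:ℝ)) + (if p-k = 0 then π/2 else 0)
      - (if p+k+1 = 0 then π/2 else 0) - (if p-k-1 = 0 then π/2 else 0))/4 := by
  have hre : ∀ m : ℤ, ∫ θ in (0:ℝ)..(π/2), Real.cos (2*m*θ) = if m = 0 then π/2 else 0 := intcos
  calc (∫ θ in (0:ℝ)..(π/2), Real.cos (2*p*θ) * (Real.sin ((2*k+1)*θ) * Real.sin θ))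
      = ∫ θ in (0:ℝ)..(π/2), (Real.cos (2*((p+k : ℤ))*θ) + Real.cos (2*((p-k : ℤ))*θ)
          - Real.cos (2*((p+k+1 : ℤ))*θ) - Real.cos (2*((p-k-1 : ℤ))*θ))/4 := by
        apply intervalIntegral.integral_congr
        intro θ _
        have := ptE p k θ
        push_cast at this ⊢
        convert this using 2 <;> ring_nf
    _ = ((if p+k = 0 then π/2 else (0:ℝ)) + (if p-k = 0 then π/2 else 0)
      - (if p+k+1 = 0 then π/2 else 0) - (if p-k-1 = 0 then π/2 else 0))/4 := by
        rw [intervalIntegral.integral_div]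
        rw [intervalIntegral.integral_sub (((intgcos _).add (intgcos _)).sub (intgcos _)) (intgcos _),
          intervalIntegral.integral_sub ((intgcos _).add (intgcos _)) (intgcos _),
          intervalIntegral.integral_add (intgcos _) (intgcos _), hre, hre, hre, hre]

lemma bin_sum (α : ℝ) (n : ℕ) (z : ℂ) :
    ((1-α : ℂ) + α * z)^n = ∑ i ∈ range (n+1), ((binomProb α n i : ℝ) : ℂ) * z^i := by
  rw [add_comm, add_pow]
  refine Finset.sum_congr rfl fun i hi => ?_
  have hin : i ≤ n := Nat.lt_succ_iff.mp (Finset.mem_range.mp hi)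
  simp only [binomProb]
  push_cast
  ring

lemma Qcos (α θ : ℝ) :
    ((Qa α (Real.cos θ) : ℝ) : ℂ) =
      ((1-α:ℂ) + α * Complex.exp (2*θ*Complex.I)) *
      ((1-α:ℂ) + α * Complex.exp (-(2*θ)*Complex.I)) := by
  set z := Complex.exp (2*θ*Complex.I) with hzdef
  set w := Complex.exp (-(2*θ)*Complex.I) with hwdef
  have hz : z * w = 1 := by
    rw [hzdef, hwdef, ← Complex.exp_add, show (2*(θ:ℂ)*Complex.I + -(2*θ)*Complex.I) = 0 by ring,
      Complex.exp_zero]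
  have hc : z + w = 2 * Complex.cos (2*θ) := by
    rw [hzdef, hwdef, Complex.two_cos, show ((2*(θ:ℂ))*Complex.I) = 2*θ*Complex.I by ring,
      show (-(2*(θ:ℂ))*Complex.I) = -(2*θ)*Complex.I by ring]
  have h2 : Complex.cos (2*(θ:ℂ)) = 2 * ((Real.cos θ : ℝ):ℂ)^2 - 1 := by
    rw [Complex.cos_two_mul, Complex.ofReal_cos]
  simp only [Qa]
  push_cast
  rw [show Complex.cos (θ:ℂ) = ((Real.cos θ : ℝ):ℂ) from (Complex.ofReal_cos θ).symm]
  linear_combination (-α^2) * hz - α*(1-α)*hc - 2*α*(1-α)*h2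

lemma Qpow (α : ℝ) (n : ℕ) (θ : ℝ) :
    Qa α (Real.cos θ) ^ n = ∑ i ∈ range (n+1), ∑ j ∈ range (n+1),
      binomProb α n i * binomProb α n j * Real.cos (2*((i:ℝ)-(j:ℝ))*θ) := by
  have key : (((Qa α (Real.cos θ))^n : ℝ) : ℂ) = ∑ i ∈ range (n+1), ∑ j ∈ range (n+1),
      ((binomProb α n i * binomProb α n j : ℝ) : ℂ)
        * Complex.exp (((2*((i:ℝ)-(j:ℝ))*θ : ℝ) : ℂ) * Complex.I) := by
    rw [Complex.ofReal_pow, Qcos, mul_pow, bin_sum, bin_sum, Finset.sum_mul_sum]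
    refine Finset.sum_congr rfl fun i _ => Finset.sum_congr rfl fun j _ => ?_
    rw [mul_mul_mul_comm, ← Complex.exp_nat_mul, ← Complex.exp_nat_mul, ← Complex.exp_add]
    push_cast
    ring_nf
  have := congrArg Complex.re key
  rw [Complex.ofReal_re, Complex.re_sum] at this
  rw [this]
  refine Finset.sum_congr rfl fun i _ => ?_
  rw [Complex.re_sum]
  refine Finset.sum_congr rfl fun j _ => ?_
  rw [Complex.re_ofReal_mul, Complex.exp_ofReal_mul_I_re]

noncomputable def Wz (α : ℝ) (n : ℕ) (m : ℤ) : ℝ :=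
  ∑ i ∈ range (n+1), ∑ j ∈ range (n+1),
    binomProb α n i * binomProb α n j * (if (j:ℤ) - i = m then 1 else 0)

lemma Wz_neg (α : ℝ) (n : ℕ) (m : ℤ) : Wz α n (-m) = Wz α n m := by
  rw [Wz, Wz, Finset.sum_comm]
  refine Finset.sum_congr rfl fun i _ => Finset.sum_congr rfl fun j _ => ?_
  rw [mul_comm (binomProb α n j) (binomProb α n i)]
  congr 1
  apply if_congr _ rfl rfl
  omega

lemma L4 (α : ℝ) (n : ℕ) (k : ℤ) :
    (∫ θ in (0:ℝ)..(π/2), Qa α (Real.cos θ)^n * (Real.sin ((2*(k:ℝ)+1)*θ) * Real.sin θ))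
      = π/4 * (Wz α n k - Wz α n (k+1)) := by
  have hcont : ∀ (i j : ℕ), Continuous (fun θ : ℝ => binomProb α n i * binomProb α n j *
      (Real.cos (2*((i:ℝ)-(j:ℝ))*θ) * (Real.sin ((2*(k:ℝ)+1)*θ) * Real.sin θ))) := by
    intro i j; fun_prop
  calc (∫ θ in (0:ℝ)..(π/2), Qa α (Real.cos θ)^n * (Real.sin ((2*(k:ℝ)+1)*θ) * Real.sin θ))
      = ∫ θ in (0:ℝ)..(π/2), ∑ i ∈ range (n+1), ∑ j ∈ range (n+1),
          binomProb α n i * binomProb α n j *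
            (Real.cos (2*((i:ℝ)-(j:ℝ))*θ) * (Real.sin ((2*(k:ℝ)+1)*θ) * Real.sin θ)) := by
        apply intervalIntegral.integral_congr
        intro θ _
        simp only [Qpow α n θ, Finset.sum_mul, mul_assoc]
    _ = ∑ i ∈ range (n+1), ∑ j ∈ range (n+1), binomProb α n i * binomProb α n j *
          ∫ θ in (0:ℝ)..(π/2), Real.cos (2*((i:ℝ)-(j:ℝ))*θ) * (Real.sin ((2*(k:ℝ)+1)*θ) * Real.sin θ) := by
        rw [intervalIntegral.integral_finset_sum (fun i _ => Continuous.intervalIntegrable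
          (continuous_finset_sum _ (fun j _ => hcont i j)) _ _)]
        refine Finset.sum_congr rfl fun i _ => ?_
        rw [intervalIntegral.integral_finset_sum (fun j _ => (hcont i j).intervalIntegrable _ _)]
        exact Finset.sum_congr rfl fun j _ => intervalIntegral.integral_const_mul _ _
    _ = ∑ i ∈ range (n+1), ∑ j ∈ range (n+1), binomProb α n i * binomProb α n j *
          (π/2 * ((if (j:ℤ)-i = k then (1:ℝ) else 0) + (if (j:ℤ)-i = -k then 1 else 0)
            - (if (j:ℤ)-i = k+1 then 1 else 0) - (if (j:ℤ)-i = -(k+1) then 1 else 0))/4) := by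
        refine Finset.sum_congr rfl fun i _ => Finset.sum_congr rfl fun j _ => ?_
        congr 1
        have h := intE ((i:ℤ)-j) k
        push_cast at h
        rw [h]
        have c1 : ((i:ℤ)-j+k = 0) = ((j:ℤ)-i = k) := by apply propext; omega
        have c2 : ((i:ℤ)-j-k = 0) = ((j:ℤ)-i = -k) := by apply propext; omega
        have c3 : ((i:ℤ)-j+k+1 = 0) = ((j:ℤ)-i = k+1) := by apply propext; omega
        have c4 : ((i:ℤ)-j-k-1 = 0) = ((j:ℤ)-i = -(k+1)) := by apply propext; omega
        simp only [c1, c2, c3, c4]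
        split_ifs <;> ring
    _ = π/8 * (Wz α n k + Wz α n (-k) - Wz α n (k+1) - Wz α n (-(k+1))) := by
        simp only [Wz, Finset.mul_sum, ← Finset.sum_add_distrib, ← Finset.sum_sub_distrib]
        refine Finset.sum_congr rfl fun i _ => Finset.sum_congr rfl fun j _ => ?_
        split_ifs <;> ring
    _ = π/4 * (Wz α n k - Wz α n (k+1)) := by
        rw [Wz_neg, Wz_neg]; ring

lemma binomProb_zero (α : ℝ) {N j : ℕ} (h : N < j) : binomProb α N j = 0 := by
  simp [binomProb, Nat.choose_eq_zero_of_lt h]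

lemma bstep (α : ℝ) (N i : ℕ) : binomProb α (N+1) i
    = (1-α) * binomProb α N i + α * (if i = 0 then 0 else binomProb α N (i-1)) := by
  rcases i with _ | t
  · simp [binomProb, pow_succ, mul_comm]
  · simp only [Nat.succ_eq_add_one, Nat.succ_ne_zero, if_false, Nat.add_sub_cancel]
    rcases Nat.lt_or_ge N (t+1) with h | h
    · rcases Nat.lt_or_ge N t with h2 | h2
      · rw [binomProb, binomProb, binomProb, Nat.choose_eq_zero_of_lt (by omega),
          Nat.choose_eq_zero_of_lt (by omega), Nat.choose_eq_zero_of_lt (by omega)]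
        simp
      · have ht : t = N := by omega
        subst ht
        rw [binomProb, binomProb, binomProb, Nat.choose_self, Nat.choose_succ_self,
          Nat.choose_self]
        simp [pow_succ]
        ring
    · rw [binomProb, binomProb, binomProb, Nat.choose_succ_succ,
        show N+1-(t+1) = (N-(t+1))+1 by omega, show N - t = (N-(t+1))+1 by omega,
        pow_succ, pow_succ]
      push_cast
      ring

lemma conv1 (α : ℝ) (N : ℕ) (f : ℕ → ℝ) :
    ∑ i ∈ range (N+2), binomProb α (N+1) i * f i
      = ∑ i ∈ range (N+1), binomProb α N i * ((1-α) * f i + α * f (i+1)) := by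
  calc ∑ i ∈ range (N+2), binomProb α (N+1) i * f i
      = ∑ i ∈ range (N+2), ((1-α) * binomProb α N i * f i
          + (if i = 0 then 0 else α * binomProb α N (i-1) * f i)) := by
        refine Finset.sum_congr rfl fun i _ => ?_
        rw [bstep]
        split_ifs <;> ring
    _ = ∑ i ∈ range (N+2), (1-α) * binomProb α N i * f i
          + ∑ i ∈ range (N+2), (if i = 0 then 0 else α * binomProb α N (i-1) * f i) := by
        rw [Finset.sum_add_distrib]
    _ = ∑ i ∈ range (N+1), (1-α) * binomProb α N i * f i
          + ∑ i ∈ range (N+1), α * binomProb α N i * f (i+1) := by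
        congr 1
        · rw [Finset.sum_range_succ, binomProb_zero α (by omega : N < N+1)]
          simp
        · rw [Finset.sum_range_succ']
          simp
    _ = ∑ i ∈ range (N+1), binomProb α N i * ((1-α) * f i + α * f (i+1)) := by
        rw [← Finset.sum_add_distrib]
        exact Finset.sum_congr rfl fun i _ => by ring

noncomputable def Tl (α : ℝ) (N t : ℕ) : ℝ := ∑ j ∈ Finset.Icc t N, binomProb α N j

lemma Tl_succ (α : ℝ) (N t : ℕ) : Tl α N t = binomProb α N t + Tl α N (t+1) := by
  rcases Nat.lt_or_ge N t with h | h
  · rw [Tl, Tl, Finset.Icc_eq_empty (by omega), Finset.Icc_eq_empty (by omega),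
      binomProb_zero α h]
    simp
  · rw [Tl, Tl, ← Finset.Ico_add_one_right_eq_Icc, Finset.sum_eq_sum_Ico_succ_bot (by omega),
      Finset.Ico_add_one_right_eq_Icc]

lemma sum_Icc_shift (g : ℕ → ℝ) (t N : ℕ) :
    ∑ j ∈ Finset.Icc (t+1) (N+1), g j = ∑ j ∈ Finset.Icc t N, g (1+j) := by
  rw [show t+1 = 1+t by omega, show N+1 = 1+N by omega, ← Finset.map_add_left_Icc,
    Finset.sum_map]
  rfl

lemma Tl_step (α : ℝ) (N t : ℕ) :
    Tl α (N+1) (t+1) = Tl α N (t+1) + α * binomProb α N t := by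
  rcases Nat.lt_or_ge N t with h | h
  · rw [Tl, Tl, Finset.Icc_eq_empty (by omega), Finset.Icc_eq_empty (by omega),
      binomProb_zero α h]
    simp
  have h2 : ∀ j, binomProb α (N+1) (1+j)
      = (1-α) * binomProb α N (1+j) + α * binomProb α N j := by
    intro j
    rw [show 1+j = j+1 by omega, bstep]
    simp
  rw [Tl, sum_Icc_shift]
  simp only [h2]
  rw [Finset.sum_add_distrib, ← Finset.mul_sum, ← Finset.mul_sum, ← sum_Icc_shift,
    Finset.sum_Icc_succ_top (by omega : t+1 ≤ N+1), binomProb_zero α (by omega : N < N+1)]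
  have h4 : ∑ j ∈ Finset.Icc t N, binomProb α N j = Tl α N t := rfl
  have h5 : ∑ j ∈ Finset.Icc (t+1) N, binomProb α N j = Tl α N (t+1) := rfl
  rw [h4, h5, Tl_succ α N t]
  ring

lemma competeProb_eq (α : ℝ) (r d n : ℕ) :
    competeProb α r d n = ∑ i ∈ range (n+1), binomProb α n i * Tl α (n+r) (i+d) := by
  refine Finset.sum_congr rfl fun i hi => ?_
  have hin : i ≤ n := by simpa [Nat.lt_succ_iff] using hi
  rw [Tl, Finset.mul_sum]
  refine Finset.sum_congr rfl fun j hj => ?_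
  have hjr : j ≤ n + r := (Finset.mem_Icc.mp hj).2
  rw [binomProb, binomProb, pow_add, show 2*n+r-i-j = (n-i)+(n+r-j) by omega, pow_add]
  ring

lemma L1 (α : ℝ) (r n e : ℕ) :
    competeProb α r (e+1) (n+1) - competeProb α r (e+1) n
      = α*(1-α) * ∑ i ∈ range (n+1), binomProb α n i *
          (binomProb α (n+r) (i+e) - binomProb α (n+r) (i+e+1)) := by
  rw [competeProb_eq, competeProb_eq, show n+1+r = (n+r)+1 by omega]
  rw [show n+1+1 = n+2 by omega]
  rw [conv1 α n (fun i => Tl α ((n+r)+1) (i+(e+1)))]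
  rw [Finset.mul_sum, ← Finset.sum_sub_distrib]
  refine Finset.sum_congr rfl fun i _ => ?_
  have e1 : Tl α ((n+r)+1) ((i+e)+1) = Tl α (n+r) ((i+e)+1) + α * binomProb α (n+r) (i+e) :=
    Tl_step α (n+r) (i+e)
  have e2 : Tl α ((n+r)+1) ((i+e+1)+1) = Tl α (n+r) ((i+e+1)+1) + α * binomProb α (n+r) (i+e+1) :=
    Tl_step α (n+r) (i+e+1)
  have e3 : Tl α (n+r) (i+e+1) = binomProb α (n+r) (i+e+1) + Tl α (n+r) ((i+e+1)+1) :=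
    Tl_succ α (n+r) (i+e+1)
  have hx1 : i+(e+1) = (i+e)+1 := by omega
  have hx2 : i+1+(e+1) = (i+e+1)+1 := by omega
  rw [hx1, hx2, e1, e2, e3]
  ring

noncomputable def cz (α : ℝ) (N : ℕ) (v : ℤ) : ℝ :=
  if 0 ≤ v then binomProb α N v.toNat else 0

lemma czeq (α : ℝ) (n : ℕ) (v : ℤ) :
    cz α n v = ∑ j ∈ range (n+1), binomProb α n j * (if (j:ℤ) = v then 1 else 0) := by
  by_cases h0 : 0 ≤ v
  · by_cases h1 : v ≤ n
    · rw [Finset.sum_eq_single v.toNat]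
      · simp [cz, if_pos h0, Int.toNat_of_nonneg h0]
      · intro j _ hj
        have : ((j:ℤ) ≠ v) := by omega
        simp [this]
      · intro hmem
        exfalso
        apply hmem
        simp only [Finset.mem_range]
        omega
    · rw [cz, if_pos h0, binomProb_zero α (by omega : n < v.toNat)]
      symm
      apply Finset.sum_eq_zero
      intro j hj
      have hjn := Finset.mem_range.mp hj
      have : (j:ℤ) ≠ v := by omega
      simp [this]
  · rw [cz, if_neg h0]
    symm
    apply Finset.sum_eq_zero
    intro j hj
    have : (j:ℤ) ≠ v := by omega
    simp [this]

lemma natVand (n r t : ℕ) :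
    (n+r).choose t = ∑ s ∈ range (r+1), r.choose s * (if s ≤ t then n.choose (t-s) else 0) := by
  rw [show n+r = r+n by omega, Nat.add_choose_eq,
    Finset.Nat.sum_antidiagonal_eq_sum_range_succ_mk]
  have h1 : ∑ k ∈ range (t+1), r.choose (k, t-k).1 * n.choose (k, t-k).2
      = ∑ s ∈ range (t+1), r.choose s * (if s ≤ t then n.choose (t-s) else 0) := by
    refine Finset.sum_congr rfl fun s hs => ?_
    have : s ≤ t := by have := Finset.mem_range.mp hs; omega
    rw [if_pos this]
  rw [show range t.succ = range (t+1) from rfl, h1]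
  set M := max t r with hM
  have e1 : ∑ s ∈ range (t+1), r.choose s * (if s ≤ t then n.choose (t-s) else 0)
      = ∑ s ∈ range (M+1), r.choose s * (if s ≤ t then n.choose (t-s) else 0) := by
    apply Finset.sum_subset (Finset.range_subset_range.mpr (by omega))
    intro x _ hx
    have : ¬ x ≤ t := by have := Finset.mem_range.not.mp hx; omega
    rw [if_neg this, mul_zero]
  have e2 : ∑ s ∈ range (r+1), r.choose s * (if s ≤ t then n.choose (t-s) else 0)
      = ∑ s ∈ range (M+1), r.choose s * (if s ≤ t then n.choose (t-s) else 0) := by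
    apply Finset.sum_subset (Finset.range_subset_range.mpr (by omega))
    intro x _ hx
    have : r < x := by have := Finset.mem_range.not.mp hx; omega
    rw [Nat.choose_eq_zero_of_lt this, zero_mul]
  rw [e1, e2]

lemma vand (α : ℝ) (n r t : ℕ) :
    binomProb α (n+r) t = ∑ s ∈ range (r+1), binomProb α r s * cz α n ((t:ℤ) - s) := by
  by_cases ht : t ≤ n + r
  · have hterm : ∀ s ∈ range (r+1), binomProb α r s * cz α n ((t:ℤ) - s)
        = ((r.choose s * (if s ≤ t then n.choose (t-s) else 0) : ℕ) : ℝ)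
            * α^t * (1-α)^(n+r-t) := by
      intro s hs
      have hsr : s ≤ r := by have := Finset.mem_range.mp hs; omega
      by_cases hst : s ≤ t
      · rw [if_pos hst]
        have hge : (0:ℤ) ≤ (t:ℤ) - s := by omega
        rw [cz, if_pos hge, show ((t:ℤ) - s).toNat = t - s by omega]
        by_cases hts : t - s ≤ n
        · have hpa : α ^ s * α ^ (t-s) = α ^ t := by
            rw [← pow_add]
            congr 1
            omega
          have hpb : (1-α) ^ (r-s) * (1-α) ^ (n-(t-s)) = (1-α)^(n+r-t) := by
            rw [← pow_add]
            congr 1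
            omega
          rw [binomProb, binomProb]
          push_cast
          rw [← hpa, ← hpb]
          ring
        · rw [binomProb, binomProb, Nat.choose_eq_zero_of_lt (by omega : n < t - s)]
          push_cast
          ring
      · rw [if_neg hst, cz, if_neg (by omega), mul_zero]
        push_cast
        ring
    rw [Finset.sum_congr rfl hterm, ← Finset.sum_mul, ← Finset.sum_mul, ← Nat.cast_sum,
      ← natVand, binomProb]
  · rw [binomProb_zero α (by omega : n + r < t)]
    symm
    apply Finset.sum_eq_zero
    intro s hs
    have hsr : s ≤ r := by have := Finset.mem_range.mp hs; omega
    by_cases hst : s ≤ t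
    · have hge : (0:ℤ) ≤ (t:ℤ) - s := by omega
      rw [cz, if_pos hge, show ((t:ℤ) - s).toNat = t - s by omega,
        binomProb_zero α (by omega : n < t - s), mul_zero]
    · rw [cz, if_neg (by omega), mul_zero]

lemma sum_cz (α : ℝ) (n : ℕ) (u : ℤ) :
    ∑ i ∈ range (n+1), binomProb α n i * cz α n ((i:ℤ) + u) = Wz α n u := by
  rw [Wz]
  refine Finset.sum_congr rfl fun i _ => ?_
  rw [czeq, Finset.mul_sum]
  refine Finset.sum_congr rfl fun j _ => ?_
  rw [← mul_assoc]
  congr 1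
  apply if_congr _ rfl rfl
  omega

lemma L2 (α : ℝ) (n r m : ℕ) :
    ∑ i ∈ range (n+1), binomProb α n i * binomProb α (n+r) (i+m)
      = ∑ s ∈ range (r+1), binomProb α r s * Wz α n ((m:ℤ) - s) := by
  have hv : ∀ i : ℕ, binomProb α (n+r) (i+m)
      = ∑ s ∈ range (r+1), binomProb α r s * cz α n ((i:ℤ) + ((m:ℤ) - s)) := by
    intro i
    rw [vand α n r (i+m)]
    refine Finset.sum_congr rfl fun s _ => ?_
    congr 2
    push_cast
    ring
  simp only [hv, Finset.mul_sum]
  rw [Finset.sum_comm]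
  refine Finset.sum_congr rfl fun s _ => ?_
  rw [← sum_cz α n ((m:ℤ) - s), Finset.mul_sum]
  refine Finset.sum_congr rfl fun i _ => by ring

lemma L5 (α : ℝ) (r n d : ℕ) (hd : 1 ≤ d) :
    ∑ s ∈ range (r+1), binomProb α r s * (Wz α n ((d:ℤ)-1-s) - Wz α n ((d:ℤ)-s))
      = -(∑ i ∈ Finset.Icc d r, binomProb α r i * (Wz α n ((i:ℤ)-d) - Wz α n ((i:ℤ)-d+1))
          - ∑ i ∈ range d, binomProb α r i * (Wz α n ((d:ℤ)-i-1) - Wz α n ((d:ℤ)-i))) := by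
  set F : ℕ → ℝ := fun s => binomProb α r s * (Wz α n ((d:ℤ)-1-s) - Wz α n ((d:ℤ)-s)) with hF
  have split : ∑ s ∈ range (r+1), F s = ∑ s ∈ range d, F s + ∑ s ∈ Finset.Icc d r, F s := by
    rcases le_or_gt d (r+1) with h | h
    · rw [Finset.range_eq_Ico, ← Finset.Ico_add_one_right_eq_Icc,
        ← Finset.sum_Ico_consecutive _ (Nat.zero_le d) h, Finset.range_eq_Ico]
    · rw [Finset.Icc_eq_empty (by omega), Finset.sum_empty, add_zero]
      apply Finset.sum_subset (Finset.range_subset_range.mpr (by omega))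
      intro x _ hx
      have : r < x := by have := Finset.mem_range.not.mp hx; omega
      simp only [hF]
      simp [binomProb_zero α this]
  rw [split]
  have e1 : ∑ s ∈ range d, F s
      = ∑ i ∈ range d, binomProb α r i * (Wz α n ((d:ℤ)-i-1) - Wz α n ((d:ℤ)-i)) := by
    refine Finset.sum_congr rfl fun s _ => ?_
    simp only [hF]
    rw [show (d:ℤ)-1-(s:ℤ) = (d:ℤ)-(s:ℤ)-1 by ring]
  have e2 : ∑ s ∈ Finset.Icc d r, F s
      = -∑ i ∈ Finset.Icc d r, binomProb α r i * (Wz α n ((i:ℤ)-d) - Wz α n ((i:ℤ)-d+1)) := by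
    rw [← Finset.sum_neg_distrib]
    refine Finset.sum_congr rfl fun s _ => ?_
    simp only [hF]
    rw [show (d:ℤ)-1-(s:ℤ) = -((s:ℤ)-d+1) by ring, Wz_neg,
      show (d:ℤ)-(s:ℤ) = -((s:ℤ)-d) by ring, Wz_neg]
    ring
  rw [e1, e2]
  ring

lemma Pt_continuous (α : ℝ) (r d : ℕ) : Continuous (Pt α r d) := by
  unfold Pt
  apply Continuous.sub <;>
    exact continuous_finset_sum _ fun i _ => continuous_const.mul (Polynomial.continuous _)

theorem competeProb_diff_integral_repr (α : ℝ) (hα : α ∈ Set.Ioo (0 : ℝ) 1)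
    (r d : ℕ) (hr : 1 ≤ r) (hd : 1 ≤ d) (n : ℕ) :
    competeProb α r d (n + 1) - competeProb α r d n =
      -(4 * α * (1 - α) / Real.pi) *
        ∫ x in (0 : ℝ)..1, Qa α x ^ n * Real.sqrt (1 - x ^ 2) * Pt α r d x := by
  obtain ⟨e, rfl⟩ : ∃ e, d = e + 1 := ⟨d - 1, by omega⟩
  set g : ℝ → ℝ := fun x => Qa α x ^ n * Real.sqrt (1 - x ^ 2) * Pt α r (e+1) x with hg
  have hgc : Continuous g := by
    apply Continuous.mul
    · apply Continuous.mul
      · unfold Qa; fun_prop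
      · exact (continuous_const.sub (continuous_pow 2)).sqrt
    · exact Pt_continuous α r (e+1)
  have hsub : (∫ x in (0:ℝ)..1, g x) = ∫ θ in (0:ℝ)..(π/2), Real.sin θ * g (Real.cos θ) := by
    have h1 : (∫ θ in (0:ℝ)..(π/2), (-Real.sin θ) • g (Real.cos θ))
        = ∫ x in (Real.cos 0)..(Real.cos (π/2)), g x :=
      intervalIntegral.integral_comp_smul_deriv
        (fun x _ => Real.hasDerivAt_cos x) (Real.continuous_sin.neg.continuousOn) hgc
    rw [Real.cos_zero, Real.cos_pi_div_two] at h1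
    have h2 : (∫ θ in (0:ℝ)..(π/2), (-Real.sin θ) • g (Real.cos θ))
        = -∫ θ in (0:ℝ)..(π/2), Real.sin θ * g (Real.cos θ) := by
      rw [← intervalIntegral.integral_neg]
      congr 1
      funext θ
      simp [smul_eq_mul]
    rw [h2] at h1
    rw [intervalIntegral.integral_symm]
    linarith [h1]
  have hpt : ∀ θ ∈ Set.uIcc (0:ℝ) (π/2),
      Real.sin θ * g (Real.cos θ)
        = (∑ i ∈ Finset.Icc (e+1) r, binomProb α r i *
            (Qa α (Real.cos θ)^n * (Real.sin ((2*((((i:ℤ) - ((e+1:ℕ):ℤ)) : ℤ):ℝ)+1)*θ) * Real.sin θ)))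
          - ∑ i ∈ Finset.range (e+1), binomProb α r i *
            (Qa α (Real.cos θ)^n * (Real.sin ((2*(((((e+1:ℕ):ℤ) - (i:ℤ) - 1) : ℤ):ℝ)+1)*θ) * Real.sin θ)) := by
    intro θ hθ
    rw [Set.uIcc_of_le (by positivity : (0:ℝ) ≤ π/2)] at hθ
    have hθ1 : 0 ≤ θ := hθ.1
    have hθ2 : θ ≤ π := le_trans hθ.2 (by linarith [Real.pi_pos])
    have hsin : Real.sqrt (1 - Real.cos θ ^ 2) = Real.sin θ := by
      rw [show 1 - Real.cos θ ^ 2 = Real.sin θ ^ 2 by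
        have := Real.sin_sq_add_cos_sq θ; linarith]
      exact Real.sqrt_sq (Real.sin_nonneg_of_nonneg_of_le_pi hθ1 hθ2)
    rw [hg]
    simp only
    rw [hsin, Pt, mul_sub, mul_sub, Finset.mul_sum, Finset.mul_sum, Finset.mul_sum,
      Finset.mul_sum]
    congr 1
    · refine Finset.sum_congr rfl fun i _ => ?_
      have hU := Polynomial.Chebyshev.U_real_cos θ (2 * ((i:ℤ) - ((e+1:ℕ):ℤ)))
      push_cast at hU ⊢
      rw [← hU]
      ring
    · refine Finset.sum_congr rfl fun i _ => ?_
      have hU := Polynomial.Chebyshev.U_real_cos θ (2 * (((e+1:ℕ):ℤ) - (i:ℤ) - 1))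
      push_cast at hU ⊢
      rw [← hU]
      ring
  have hcont2 : ∀ (c : ℝ) (k : ℤ), Continuous (fun θ : ℝ => c *
      (Qa α (Real.cos θ)^n * (Real.sin ((2*(k:ℝ)+1)*θ) * Real.sin θ))) := by
    intro c k
    unfold Qa
    fun_prop
  have hint : (∫ x in (0:ℝ)..1, g x)
      = (∑ i ∈ Finset.Icc (e+1) r, binomProb α r i *
          (π/4 * (Wz α n ((i:ℤ) - ((e+1:ℕ):ℤ)) - Wz α n ((i:ℤ) - ((e+1:ℕ):ℤ) + 1))))
        - ∑ i ∈ Finset.range (e+1), binomProb α r i *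
          (π/4 * (Wz α n (((e+1:ℕ):ℤ) - i - 1) - Wz α n (((e+1:ℕ):ℤ) - i))) := by
    rw [hsub, intervalIntegral.integral_congr hpt, intervalIntegral.integral_sub
      (Continuous.intervalIntegrable (continuous_finset_sum _ fun i _ => hcont2 _ _) _ _)
      (Continuous.intervalIntegrable (continuous_finset_sum _ fun i _ => hcont2 _ _) _ _),
      intervalIntegral.integral_finset_sum (fun i _ => (hcont2 _ _).intervalIntegrable _ _),
      intervalIntegral.integral_finset_sum (fun i _ => (hcont2 _ _).intervalIntegrable _ _)]
    congr 1
    · refine Finset.sum_congr rfl fun i _ => ?_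
      rw [intervalIntegral.integral_const_mul, L4]
    · refine Finset.sum_congr rfl fun i _ => ?_
      rw [intervalIntegral.integral_const_mul, L4,
        show ((e+1:ℕ):ℤ) - (i:ℤ) - 1 + 1 = ((e+1:ℕ):ℤ) - i by ring]
  rw [L1, hint]
  have hL2a := L2 α n r e
  have hL2b := L2 α n r (e+1)
  have hsplit : ∑ i ∈ range (n+1), binomProb α n i *
      (binomProb α (n+r) (i+e) - binomProb α (n+r) (i+e+1))
      = ∑ s ∈ range (r+1), binomProb α r s *
          (Wz α n (((e+1:ℕ):ℤ)-1-s) - Wz α n (((e+1:ℕ):ℤ)-s)) := by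
    rw [show (∑ i ∈ range (n+1), binomProb α n i *
        (binomProb α (n+r) (i+e) - binomProb α (n+r) (i+e+1)))
      = (∑ i ∈ range (n+1), binomProb α n i * binomProb α (n+r) (i+e))
        - ∑ i ∈ range (n+1), binomProb α n i * binomProb α (n+r) (i+(e+1)) by
        rw [← Finset.sum_sub_distrib]
        exact Finset.sum_congr rfl fun i _ => by rw [show i+(e+1) = i+e+1 from rfl]; ring]
    rw [hL2a, hL2b, ← Finset.sum_sub_distrib]
    refine Finset.sum_congr rfl fun s _ => ?_
    rw [show (((e+1:ℕ):ℤ))-1-(s:ℤ) = (e:ℤ)-s by push_cast; ring,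
      show (((e+1:ℕ):ℤ))-(s:ℤ) = ((e+1:ℕ):ℤ)-s from rfl]
    have : ((e+1:ℕ):ℤ)-(s:ℤ) = ((e:ℤ)+1)-s := by push_cast; ring
    rw [this]
    have h2 : ∑ s' ∈ range (r+1), binomProb α r s' * Wz α n (((e+1:ℕ):ℤ) - s')
        = ∑ s' ∈ range (r+1), binomProb α r s' * Wz α n (((e:ℤ)+1) - s') := by
      refine Finset.sum_congr rfl fun s' _ => ?_
      rw [show ((e+1:ℕ):ℤ)-(s':ℤ) = ((e:ℤ)+1)-s' by push_cast; ring]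
    ring
  rw [hsplit, L5 α r n (e+1) (by omega)]
  have hA : ∑ i ∈ Finset.Icc (e+1) r, binomProb α r i *
        (π/4 * (Wz α n ((i:ℤ) - ((e+1:ℕ):ℤ)) - Wz α n ((i:ℤ) - ((e+1:ℕ):ℤ) + 1)))
      = π/4 * ∑ i ∈ Finset.Icc (e+1) r, binomProb α r i *
          (Wz α n ((i:ℤ) - ((e+1:ℕ):ℤ)) - Wz α n ((i:ℤ) - ((e+1:ℕ):ℤ) + 1)) := by
    rw [Finset.mul_sum]
    exact Finset.sum_congr rfl fun i _ => by ring
  have hB : ∑ i ∈ Finset.range (e+1), binomProb α r i *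
        (π/4 * (Wz α n (((e+1:ℕ):ℤ) - i - 1) - Wz α n (((e+1:ℕ):ℤ) - i)))
      = π/4 * ∑ i ∈ Finset.range (e+1), binomProb α r i *
          (Wz α n (((e+1:ℕ):ℤ) - i - 1) - Wz α n (((e+1:ℕ):ℤ) - i)) := by
    rw [Finset.mul_sum]
    exact Finset.sum_congr rfl fun i _ => by ring
  rw [hA, hB]
  have hπ : (π:ℝ) ≠ 0 := Real.pi_ne_zero
  field_simp
end

section
/- For every α ∈ (0,1), all positive integers r, d, and every real x, the two polynomial expressions agree: Σ_{i=d}^{r} P(S_r = i) U_{2(i−d)}(x) − Σ_{i=0}^{d−1} P(S_r = i) U_{2(d−i−1)}(x) = Σ_{j=0}^{r+d} [d^{2j}/dt^{2j} ( t^{j−d} (1 − α + α t)^r )]|_{t=−1} · (2x)^{2j}/(2j)!. In particular, evaluating at x = 1 gives the value 2αr − 2d + 1. -/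
open Finset Filter Topology

/-- The polynomial `P_α^{r,d}` whose coefficient of `(2x)^(2j)/(2j)!` is the `2j`-th
derivative of `t ↦ t^(j-d) (1 - α + α t)^r` at `t = -1`. -/
noncomputable def Pa (α : ℝ) (r d : ℕ) (x : ℝ) : ℝ :=
  ∑ j ∈ Finset.range (r + d + 1),
    iteratedDeriv (2 * j) (fun t : ℝ => t ^ ((j : ℤ) - (d : ℤ)) * (1 - α + α * t) ^ r) (-1)
      * (2 * x) ^ (2 * j) / ((2 * j).factorial : ℝ)


lemma evEq_iterate_deriv {f g : ℝ → ℝ} {x : ℝ} (h : f =ᶠ[nhds x] g) (k : ℕ) :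
    deriv^[k] f =ᶠ[nhds x] deriv^[k] g := by
  induction k with
  | zero => exact h
  | succ k ih => rw [Function.iterate_succ_apply', Function.iterate_succ_apply']
                 exact ih.deriv

lemma iter_deriv_sum_zpow (c : ℕ → ℝ) (m : ℕ → ℤ) (n : ℕ) (k : ℕ) :
    Set.EqOn (deriv^[k] (fun t : ℝ => ∑ i ∈ range n, c i * t ^ m i))
      (fun t => ∑ i ∈ range n, c i * ((∏ l ∈ range k, ((m i : ℝ) - l)) * t ^ (m i - k)))
      {t : ℝ | t ≠ 0} := by
  induction k with
  | zero =>
    intro t _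
    simp
  | succ k ih =>
    intro t ht
    rw [Function.iterate_succ_apply']
    have h1 : deriv^[k] (fun t : ℝ => ∑ i ∈ range n, c i * t ^ m i) =ᶠ[nhds t]
        (fun t => ∑ i ∈ range n, c i * ((∏ l ∈ range k, ((m i : ℝ) - l)) * t ^ (m i - k))) :=
      Filter.eventuallyEq_of_mem (isOpen_compl_singleton.mem_nhds ht) ih
    rw [h1.deriv_eq]
    have h2 : HasDerivAt
        (fun t : ℝ => ∑ i ∈ range n, c i * ((∏ l ∈ range k, ((m i : ℝ) - l)) * t ^ (m i - k)))
        (∑ i ∈ range n, c i * ((∏ l ∈ range k, ((m i : ℝ) - l)) *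
          (((m i - k : ℤ) : ℝ) * t ^ (m i - k - 1)))) t := by
      apply HasDerivAt.fun_sum
      intro i _
      exact ((hasDerivAt_zpow (m i - k) t (Or.inl ht)).const_mul
        (∏ l ∈ range k, ((m i : ℝ) - l))).const_mul (c i)
    rw [h2.deriv]
    refine Finset.sum_congr rfl fun i _ => ?_
    rw [prod_range_succ]
    have : (m i : ℤ) - (k + 1 : ℕ) = m i - k - 1 := by push_cast; ring
    rw [this]
    push_cast
    ring

lemma fj_eventuallyEq (α : ℝ) (r d j : ℕ) :
    (fun t : ℝ => t ^ ((j : ℤ) - (d : ℤ)) * (1 - α + α * t) ^ r) =ᶠ[nhds (-1:ℝ)]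
    (fun t => ∑ i ∈ range (r+1), binomProb α r i * t ^ ((i : ℤ) + j - d)) := by
  have h0 : {t : ℝ | t ≠ 0} ∈ nhds (-1 : ℝ) :=
    isOpen_compl_singleton.mem_nhds (by norm_num)
  filter_upwards [h0] with t ht
  have hexp : (1 - α + α * t) ^ r
      = ∑ i ∈ range (r+1), (α * t) ^ i * (1 - α) ^ (r - i) * (r.choose i : ℝ) := by
    rw [← add_pow]
    ring_nf
  rw [hexp, Finset.mul_sum]
  refine Finset.sum_congr rfl fun i _ => ?_
  rw [binomProb]
  rw [mul_pow]
  have : t ^ ((i : ℤ) + j - d) = t ^ ((j : ℤ) - d) * t ^ (i : ℤ) := by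
    rw [← zpow_add₀ ht]; ring_nf
  rw [this, zpow_natCast]
  ring

lemma iteratedDeriv_fj (α : ℝ) (r d j : ℕ) :
    iteratedDeriv (2*j) (fun t : ℝ => t ^ ((j : ℤ) - (d : ℤ)) * (1 - α + α * t) ^ r) (-1)
    = ∑ i ∈ range (r+1), binomProb α r i *
        ((∏ l ∈ range (2*j), ((((i:ℤ) + j - d : ℤ) : ℝ) - l)) * (-1:ℝ) ^ ((i:ℤ) + j - d - 2*j)) := by
  rw [iteratedDeriv_eq_iterate]
  have h1 := (evEq_iterate_deriv (fj_eventuallyEq α r d j) (2*j)).eq_of_nhds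
  rw [h1]
  have h2 := iter_deriv_sum_zpow (binomProb α r) (fun i => (i:ℤ) + j - d) (r+1) (2*j)
    (show (-1 : ℝ) ∈ {t : ℝ | t ≠ 0} by norm_num)
  rw [h2]
  refine Finset.sum_congr rfl fun i _ => ?_
  congr 2

noncomputable def cA (m j : ℕ) : ℝ :=
  (∏ l ∈ range (2*j), ((m:ℝ) + (j:ℝ) - (l:ℝ))) * (-1:ℝ) ^ ((m:ℤ) - (j:ℤ)) / ((2*j).factorial : ℝ)

lemma cA_vanish (m j : ℕ) (h : m < j) : cA m j = 0 := by
  rw [cA]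
  have hmem : m + j ∈ range (2*j) := by simp; omega
  rw [Finset.prod_eq_zero hmem (by push_cast; ring)]
  simp

lemma prod_dec1 (c : ℝ) (j : ℕ) :
    ∏ l ∈ range (2*(j+1)), (c - (l:ℝ)) = c * (c-1) * ∏ l ∈ range (2*j), (c - 2 - l) := by
  have h : 2*(j+1) = (2*j+1)+1 := by ring
  rw [h, Finset.prod_range_succ', Finset.prod_range_succ']
  rw [Finset.prod_congr rfl (fun l (_ : l ∈ range (2*j)) =>
    (by push_cast; ring : c - ((l+1+1 : ℕ):ℝ) = c - 2 - (l:ℝ)))]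
  push_cast
  ring

lemma prod_dec2 (c : ℝ) (j : ℕ) :
    ∏ l ∈ range (2*(j+1)), (c - (l:ℝ))
      = c * (∏ l ∈ range (2*j), (c - 1 - l)) * (c - 1 - 2*j) := by
  have h : 2*(j+1) = (2*j+1)+1 := by ring
  rw [h, Finset.prod_range_succ', Finset.prod_range_succ]
  rw [Finset.prod_congr rfl (fun l (_ : l ∈ range (2*j)) =>
    (by push_cast; ring : c - ((l+1 : ℕ):ℝ) = c - 1 - (l:ℝ)))]
  push_cast
  ring

lemma prod_dec3 (c : ℝ) (j : ℕ) :
    ∏ l ∈ range (2*(j+1)), (c - (l:ℝ))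
      = (∏ l ∈ range (2*j), (c - l)) * (c - 2*j) * (c - 2*j - 1) := by
  have h : 2*(j+1) = (2*j+1)+1 := by ring
  rw [h, Finset.prod_range_succ, Finset.prod_range_succ]
  push_cast
  ring

lemma cA_rec (m j : ℕ) :
    cA (m+2) (j+1) = cA (m+1) j - 2 * cA (m+1) (j+1) - cA m (j+1) := by
  have hne : (-1:ℝ) ≠ 0 := by norm_num
  set s : ℝ := (-1:ℝ) ^ ((m:ℤ) - (j:ℤ)) with hs
  have hfact : (((2*(j+1)).factorial : ℕ) : ℝ)
      = ((2*(j:ℝ)+2)*(2*(j:ℝ)+1)) * (((2*j).factorial : ℕ) : ℝ) := by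
    have h : 2*(j+1) = (2*j+1)+1 := by ring
    rw [h, Nat.factorial_succ, Nat.factorial_succ]; push_cast; ring
  have e1 : ∏ l ∈ range (2*(j+1)), (((m+2:ℕ):ℝ) + ((j+1:ℕ):ℝ) - (l:ℝ))
      = ((m:ℝ)+j+3) * ((m:ℝ)+j+2) * ∏ l ∈ range (2*j), ((m:ℝ)+1+j - l) := by
    rw [Finset.prod_congr rfl (fun l (_ : l ∈ range (2*(j+1))) =>
      (by push_cast; ring : ((m+2:ℕ):ℝ) + ((j+1:ℕ):ℝ) - (l:ℝ) = ((m:ℝ)+(j:ℝ)+3) - l))]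
    rw [prod_dec1]
    rw [Finset.prod_congr rfl (fun l (_ : l ∈ range (2*j)) =>
      (by push_cast; ring : ((m:ℝ)+(j:ℝ)+3) - 2 - (l:ℝ) = (m:ℝ)+1+j - l))]
    ring
  have e2 : ∏ l ∈ range (2*j), (((m+1:ℕ):ℝ) + ((j:ℕ):ℝ) - (l:ℝ))
      = ∏ l ∈ range (2*j), ((m:ℝ)+1+j - l) :=
    Finset.prod_congr rfl (fun l _ => by push_cast; ring)
  have e3 : ∏ l ∈ range (2*(j+1)), (((m+1:ℕ):ℝ) + ((j+1:ℕ):ℝ) - (l:ℝ))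
      = ((m:ℝ)+j+2) * (∏ l ∈ range (2*j), ((m:ℝ)+1+j - l)) * ((m:ℝ)-j+1) := by
    rw [Finset.prod_congr rfl (fun l (_ : l ∈ range (2*(j+1))) =>
      (by push_cast; ring : ((m+1:ℕ):ℝ) + ((j+1:ℕ):ℝ) - (l:ℝ) = ((m:ℝ)+(j:ℝ)+2) - l))]
    rw [prod_dec2]
    rw [Finset.prod_congr rfl (fun l (_ : l ∈ range (2*j)) =>
      (by push_cast; ring : ((m:ℝ)+(j:ℝ)+2) - 1 - (l:ℝ) = (m:ℝ)+1+j - l))]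
    ring
  have e4 : ∏ l ∈ range (2*(j+1)), (((m:ℕ):ℝ) + ((j+1:ℕ):ℝ) - (l:ℝ))
      = (∏ l ∈ range (2*j), ((m:ℝ)+1+j - l)) * ((m:ℝ)-j+1) * ((m:ℝ)-j) := by
    rw [Finset.prod_congr rfl (fun l (_ : l ∈ range (2*(j+1))) =>
      (by push_cast; ring : ((m:ℕ):ℝ) + ((j+1:ℕ):ℝ) - (l:ℝ) = ((m:ℝ)+(j:ℝ)+1) - l))]
    rw [prod_dec3]
    rw [Finset.prod_congr rfl (fun l (_ : l ∈ range (2*j)) =>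
      (by push_cast; ring : ((m:ℝ)+(j:ℝ)+1) - (l:ℝ) = (m:ℝ)+1+j - l))]
    push_cast; ring
  have f1 : (-1:ℝ)^(((m+2:ℕ):ℤ) - ((j+1:ℕ):ℤ)) = -s := by
    rw [show ((m+2:ℕ):ℤ) - ((j+1:ℕ):ℤ) = ((m:ℤ) - j) + 1 by push_cast; ring,
      zpow_add_one₀ hne]
    ring
  have f2 : (-1:ℝ)^(((m+1:ℕ):ℤ) - ((j:ℕ):ℤ)) = -s := by
    rw [show ((m+1:ℕ):ℤ) - ((j:ℕ):ℤ) = ((m:ℤ) - j) + 1 by push_cast; ring,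
      zpow_add_one₀ hne]
    ring
  have f3 : (-1:ℝ)^(((m+1:ℕ):ℤ) - ((j+1:ℕ):ℤ)) = s := by
    rw [show ((m+1:ℕ):ℤ) - ((j+1:ℕ):ℤ) = (m:ℤ) - j by push_cast; ring]
  have f4 : (-1:ℝ)^(((m:ℕ):ℤ) - ((j+1:ℕ):ℤ)) = -s := by
    rw [show ((m:ℕ):ℤ) - ((j+1:ℕ):ℤ) = ((m:ℤ) - j) + (-1) by push_cast; ring,
      zpow_add₀ hne]
    norm_num [hs]
  simp only [cA]
  rw [e1, e2, e3, e4, f1, f2, f3, f4, hfact]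
  have hF : (((2*j).factorial : ℕ) : ℝ) ≠ 0 := by
    exact_mod_cast Nat.factorial_ne_zero _
  have hd1 : (2*(j:ℝ)+2) ≠ 0 := by positivity
  have hd2 : (2*(j:ℝ)+1) ≠ 0 := by positivity
  field_simp
  ring

lemma cA_zero_rec (m : ℕ) : cA (m+2) 0 = -2 * cA (m+1) 0 - cA m 0 := by
  have h : ∀ k : ℕ, cA k 0 = (-1:ℝ)^((k:ℤ)) := by
    intro k; simp [cA]
  rw [h, h, h]
  rw [show ((m+2:ℕ):ℤ) = ((m:ℤ))+1+1 by push_cast; ring,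
     show ((m+1:ℕ):ℤ) = (m:ℤ)+1 by push_cast; ring,
     zpow_add_one₀ (by norm_num : (-1:ℝ) ≠ 0), zpow_add_one₀ (by norm_num : (-1:ℝ) ≠ 0)]
  ring

lemma sum_rec (m : ℕ) (u : ℝ) :
    ∑ j ∈ range (m+3), cA (m+2) j * u^j
      = (u - 2) * (∑ j ∈ range (m+2), cA (m+1) j * u^j)
        - ∑ j ∈ range (m+1), cA m j * u^j := by
  have hext : ∑ j ∈ range (m+2), cA m j * u^j = ∑ j ∈ range (m+1), cA m j * u^j := by
    rw [Finset.sum_range_succ, cA_vanish m (m+1) (by omega)]; ring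
  rw [← hext]
  have step1 : (u - 2) * (∑ j ∈ range (m+2), cA (m+1) j * u^j)
        - ∑ j ∈ range (m+2), cA m j * u^j
      = (∑ j ∈ range (m+2), cA (m+1) j * u^(j+1))
        - ∑ j ∈ range (m+2), (2 * cA (m+1) j + cA m j) * u^j := by
    rw [Finset.mul_sum, ← Finset.sum_sub_distrib, ← Finset.sum_sub_distrib]
    refine Finset.sum_congr rfl fun j _ => by ring
  rw [step1]
  have step2 : ∑ j ∈ range (m+2), (2 * cA (m+1) j + cA m j) * u ^ j
      = (∑ j ∈ range (m+1), (2 * cA (m+1) (j+1) + cA m (j+1)) * u^(j+1))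
        + (2 * cA (m+1) 0 + cA m 0) * u^0 :=
    Finset.sum_range_succ' _ _
  have step2' : ∑ j ∈ range (m+2), (2 * cA (m+1) (j+1) + cA m (j+1)) * u^(j+1)
      = ∑ j ∈ range (m+1), (2 * cA (m+1) (j+1) + cA m (j+1)) * u^(j+1) := by
    rw [Finset.sum_range_succ, cA_vanish (m+1) (m+2) (by omega), cA_vanish m (m+2) (by omega)]
    ring
  rw [step2, ← step2']
  have lhs : ∑ j ∈ range (m+3), cA (m+2) j * u^j
      = (∑ j ∈ range (m+2), cA (m+2) (j+1) * u^(j+1)) + cA (m+2) 0 * u^0 :=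
    Finset.sum_range_succ' _ _
  rw [lhs, cA_zero_rec]
  have key : ∑ j ∈ range (m+2), cA (m+2) (j+1) * u^(j+1)
      = ∑ j ∈ range (m+2), (cA (m+1) j * u^(j+1)
          - (2 * cA (m+1) (j+1) + cA m (j+1)) * u^(j+1)) :=
    Finset.sum_congr rfl fun j _ => by rw [cA_rec]; ring
  rw [key, Finset.sum_sub_distrib]
  ring

open Polynomial.Chebyshev in
lemma U_eval_rec (n : ℤ) (x : ℝ) :
    (Polynomial.Chebyshev.U ℝ (n+4)).eval x
      = (4*x^2 - 2) * (Polynomial.Chebyshev.U ℝ (n+2)).eval x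
        - (Polynomial.Chebyshev.U ℝ n).eval x := by
  have h2 := U_add_two ℝ n
  have h3 : Polynomial.Chebyshev.U ℝ (n+3)
      = 2 * Polynomial.X * Polynomial.Chebyshev.U ℝ (n+2) - Polynomial.Chebyshev.U ℝ (n+1) := by
    simpa [show n+1+2 = n+3 by ring, show n+1+1 = n+2 by ring] using U_add_two ℝ (n+1)
  have h4 : Polynomial.Chebyshev.U ℝ (n+4)
      = 2 * Polynomial.X * Polynomial.Chebyshev.U ℝ (n+3) - Polynomial.Chebyshev.U ℝ (n+2) := by
    simpa [show n+2+2 = n+4 by ring, show n+2+1 = n+3 by ring] using U_add_two ℝ (n+2)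
  have E2 : (Polynomial.Chebyshev.U ℝ (n+2)).eval x
      = 2*x*(Polynomial.Chebyshev.U ℝ (n+1)).eval x - (Polynomial.Chebyshev.U ℝ n).eval x := by
    rw [h2]; simp
  have E3 : (Polynomial.Chebyshev.U ℝ (n+3)).eval x
      = 2*x*(Polynomial.Chebyshev.U ℝ (n+2)).eval x - (Polynomial.Chebyshev.U ℝ (n+1)).eval x := by
    rw [h3]; simp
  have E4 : (Polynomial.Chebyshev.U ℝ (n+4)).eval x
      = 2*x*(Polynomial.Chebyshev.U ℝ (n+3)).eval x - (Polynomial.Chebyshev.U ℝ (n+2)).eval x := by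
    rw [h4]; simp
  linear_combination E4 + (2*x)*E3 + E2

lemma U_even_eval : ∀ m : ℕ, ∀ x : ℝ,
    (Polynomial.Chebyshev.U ℝ (2*(m:ℤ))).eval x
      = ∑ j ∈ range (m+1), cA m j * (2*x)^(2*j) := by
  intro m
  induction m using Nat.strong_induction_on with
  | _ m ih =>
    match m with
    | 0 => intro x; simp [cA]
    | 1 =>
      intro x
      have : Polynomial.Chebyshev.U ℝ (2*((1:ℕ):ℤ)) = Polynomial.Chebyshev.U ℝ 2 := by norm_num
      rw [this]
      have h2 : Polynomial.Chebyshev.U ℝ 2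
          = 2 * Polynomial.X * Polynomial.Chebyshev.U ℝ 1 - Polynomial.Chebyshev.U ℝ 0 := by
        simpa using Polynomial.Chebyshev.U_add_two ℝ 0
      rw [h2, Polynomial.Chebyshev.U_one, Polynomial.Chebyshev.U_zero]
      simp [Finset.sum_range_succ, cA]
      norm_num
      ring
    | (m+2) =>
      intro x
      have h0 := ih m (by omega) x
      have h1 := ih (m+1) (by omega) x
      have hidx : 2*((m+2:ℕ):ℤ) = 2*(m:ℤ) + 4 := by push_cast; ring
      have hidx1 : 2*(m:ℤ) + 2 = 2*((m+1:ℕ):ℤ) := by push_cast; ring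
      rw [hidx, U_eval_rec, hidx1, h1, h0]
      have hu : ∀ j : ℕ, (2*x)^(2*j) = ((2*x)^2)^j := fun j => by rw [← pow_mul]
      calc (4*x^2-2) * (∑ j ∈ range (m+2), cA (m+1) j * (2*x)^(2*j))
            - ∑ j ∈ range (m+1), cA m j * (2*x)^(2*j)
          = ((2*x)^2 - 2) * (∑ j ∈ range (m+2), cA (m+1) j * ((2*x)^2)^j)
            - ∑ j ∈ range (m+1), cA m j * ((2*x)^2)^j := by
            simp only [hu]; ring_nf
        _ = ∑ j ∈ range (m+3), cA (m+2) j * ((2*x)^2)^j := (sum_rec m ((2*x)^2)).symm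
        _ = ∑ j ∈ range (m+3), cA (m+2) j * (2*x)^(2*j) := by simp only [hu]

lemma U_even_eval_ext (m N : ℕ) (h : m ≤ N) (x : ℝ) :
    (Polynomial.Chebyshev.U ℝ (2*(m:ℤ))).eval x
      = ∑ j ∈ range (N+1), cA m j * (2*x)^(2*j) := by
  rw [U_even_eval m x]
  apply Finset.sum_subset (by rw [Finset.range_subset_range]; omega)
  intro j hj hj'
  rw [cA_vanish m j (by simp at hj'; omega), zero_mul]

lemma U_eval_one : ∀ n : ℕ, (Polynomial.Chebyshev.U ℝ (n:ℤ)).eval 1 = n+1 := by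
  intro n
  induction n using Nat.strong_induction_on with
  | _ n ih =>
    match n with
    | 0 => simp [Polynomial.Chebyshev.U_zero]
    | 1 => simp [Polynomial.Chebyshev.U_one]; norm_num
    | (n+2) =>
      have h0 := ih n (by omega)
      have h1 := ih (n+1) (by omega)
      have hidx : ((n+2:ℕ):ℤ) = (n:ℤ) + 2 := by push_cast; ring
      rw [hidx, Polynomial.Chebyshev.U_add_two]
      have hidx1 : (n:ℤ) + 1 = ((n+1:ℕ):ℤ) := by push_cast; ring
      simp only [Polynomial.eval_sub, Polynomial.eval_mul, Polynomial.eval_ofNat,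
        Polynomial.eval_X, Polynomial.eval_one, hidx1, h1, h0]
      push_cast
      ring

lemma Ei_ge (d i N : ℕ) (hdi : d ≤ i) (hN : i - d ≤ N) (x : ℝ) :
    ∑ j ∈ range (N+1),
      (∏ l ∈ range (2*j), ((((i:ℤ) + j - d : ℤ) : ℝ) - l)) * (-1:ℝ)^((i:ℤ) + j - d - 2*j)
        * (2*x)^(2*j) / ((2*j).factorial : ℝ)
    = (Polynomial.Chebyshev.U ℝ (2*((i:ℤ) - d))).eval x := by
  set m := i - d with hm
  have hz : (i:ℤ) - d = (m:ℤ) := by omega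
  rw [show 2*((i:ℤ) - d) = 2*(m:ℤ) by rw [hz], U_even_eval_ext m N hN x]
  refine Finset.sum_congr rfl fun j _ => ?_
  have hprod : ∏ l ∈ range (2*j), ((((i:ℤ) + j - d : ℤ) : ℝ) - l)
      = ∏ l ∈ range (2*j), ((m:ℝ) + j - l) := by
    refine Finset.prod_congr rfl fun l _ => ?_
    rw [show (i:ℤ) + j - d = (m:ℤ) + j by omega]
    push_cast; ring
  have hsign : (-1:ℝ)^((i:ℤ) + j - d - 2*j) = (-1:ℝ)^((m:ℤ) - j) := by
    rw [show (i:ℤ) + j - d - 2*j = (m:ℤ) - j by omega]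
  rw [hprod, hsign, cA]
  ring

lemma Ei_lt (d i N : ℕ) (hi : i < d) (hN : d - 1 - i ≤ N) (x : ℝ) :
    ∑ j ∈ range (N+1),
      (∏ l ∈ range (2*j), ((((i:ℤ) + j - d : ℤ) : ℝ) - l)) * (-1:ℝ)^((i:ℤ) + j - d - 2*j)
        * (2*x)^(2*j) / ((2*j).factorial : ℝ)
    = -(Polynomial.Chebyshev.U ℝ (2*((d:ℤ) - i - 1))).eval x := by
  have hne : (-1:ℝ) ≠ 0 := by norm_num
  set m := d - 1 - i with hm
  rw [show 2*((d:ℤ) - i - 1) = 2*(m:ℤ) by omega, U_even_eval_ext m N hN x,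
    ← Finset.sum_neg_distrib]
  refine Finset.sum_congr rfl fun j _ => ?_
  have hprod : ∏ l ∈ range (2*j), ((m:ℝ) + (j:ℝ) - (l:ℝ))
      = ∏ l ∈ range (2*j), ((((i:ℤ) + j - d : ℤ) : ℝ) - l) := by
    rw [← Finset.prod_range_reflect (fun l => (m:ℝ) + (j:ℝ) - (l:ℝ)) (2*j)]
    have step : ∀ l ∈ range (2*j),
        (m:ℝ) + (j:ℝ) - ((2*j - 1 - l : ℕ):ℝ)
          = (-1) * (((((i:ℤ) + j - d : ℤ)):ℝ) - (l:ℝ)) := by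
      intro l hl
      have hl' : l < 2*j := Finset.mem_range.mp hl
      have hcast : ((2*j - 1 - l : ℕ) : ℝ) = 2*(j:ℝ) - 1 - l := by
        have h1 : ((2*j - 1 - l : ℕ) : ℤ) = 2*(j:ℤ) - 1 - l := by omega
        exact_mod_cast h1
      have hmr : (m:ℝ) = (d:ℝ) - 1 - i := by
        have h2 : ((m:ℕ) : ℤ) = (d:ℤ) - 1 - i := by omega
        exact_mod_cast h2
      have hC : ((((i:ℤ) + j - d : ℤ)):ℝ) = (i:ℝ) + j - d := by push_cast; ring
      rw [hcast, hmr, hC]; ring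
    rw [Finset.prod_congr rfl step, Finset.prod_mul_distrib, Finset.prod_const,
      Finset.card_range, Even.neg_one_pow (even_two_mul j), one_mul]
  have hsign : (-1:ℝ)^((i:ℤ) + j - d - 2*j) = -(-1:ℝ)^((m:ℤ) - j) := by
    rw [show (i:ℤ) + j - d - 2*j = ((m:ℤ) - j) + (-(2*(m:ℤ)+1)) by omega, zpow_add₀ hne,
      zpow_neg, show (2*(m:ℤ)+1) = ((2*m+1 : ℕ):ℤ) by omega, zpow_natCast,
      Odd.neg_one_pow ⟨m, by ring⟩]
    norm_num
  rw [← hprod, hsign, cA]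
  ring

lemma combine_sum (r d : ℕ) (g : ℕ → ℝ) (hg : ∀ i, r < i → g i = 0) :
    ∑ i ∈ range (r+1), g i = ∑ i ∈ Finset.Icc d r, g i + ∑ i ∈ range d, g i := by
  rcases le_or_gt d (r+1) with h | h
  · rw [Finset.range_eq_Ico, ← Finset.sum_Ico_consecutive g (Nat.zero_le d) h,
      Finset.Ico_add_one_right_eq_Icc, ← Finset.range_eq_Ico]
    exact add_comm _ _
  · rw [Finset.Icc_eq_empty (by omega), Finset.sum_empty, zero_add]
    exact Finset.sum_subset (by rw [Finset.range_subset_range]; omega)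
      (fun i _ hi => hg i (by simp at hi; omega))

lemma binomProb_vanish (α : ℝ) (r i : ℕ) (h : r < i) : binomProb α r i = 0 := by
  rw [binomProb, Nat.choose_eq_zero_of_lt h]
  simp

lemma sum_binomProb (α : ℝ) (r : ℕ) : ∑ i ∈ range (r+1), binomProb α r i = 1 := by
  have h1 : ∑ i ∈ range (r+1), binomProb α r i
      = ∑ i ∈ range (r+1), α^i * (1-α)^(r-i) * (r.choose i : ℝ) :=
    Finset.sum_congr rfl fun i _ => by rw [binomProb]; ring
  rw [h1, ← add_pow]
  norm_num

lemma sum_i_binomProb (α : ℝ) (r' : ℕ) :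
    ∑ i ∈ range (r'+1+1), (i:ℝ) * binomProb α (r'+1) i = ((r'+1 : ℕ):ℝ) * α := by
  rw [Finset.sum_range_succ']
  simp only [Nat.cast_zero, zero_mul, add_zero]
  have key : ∀ i ∈ range (r'+1), ((i+1:ℕ):ℝ) * binomProb α (r'+1) (i+1)
      = ((r'+1 : ℕ):ℝ) * α * binomProb α r' i := by
    intro i hi
    have hi' : i < r'+1 := Finset.mem_range.mp hi
    have hc : ((r'+1).choose (i+1) : ℝ) * ((i+1:ℕ):ℝ) = ((r'+1:ℕ):ℝ) * (r'.choose i : ℝ) := by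
      exact_mod_cast congrArg (Nat.cast (R := ℝ)) (Nat.add_one_mul_choose_eq r' i).symm
    rw [binomProb, binomProb]
    have hsub : r' + 1 - (i+1) = r' - i := by omega
    rw [hsub]
    calc ((i+1:ℕ):ℝ) * ((r'+1).choose (i+1) * α ^ (i+1) * (1-α)^(r'-i))
        = (((r'+1).choose (i+1) : ℝ) * ((i+1:ℕ):ℝ)) * α ^ (i+1) * (1-α)^(r'-i) := by ring
      _ = (((r'+1:ℕ):ℝ) * (r'.choose i : ℝ)) * α ^ (i+1) * (1-α)^(r'-i) := by rw [hc]
      _ = ((r'+1 : ℕ):ℝ) * α * ((r'.choose i : ℝ) * α ^ i * (1-α)^(r'-i)) := by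
          rw [pow_succ]; ring
  rw [Finset.sum_congr rfl key, ← Finset.mul_sum, sum_binomProb α r', mul_one]

theorem Pt_eq_Pa (α : ℝ) (hα : α ∈ Set.Ioo (0 : ℝ) 1) (r d : ℕ) (hr : 1 ≤ r) (hd : 1 ≤ d) :
    (∀ x : ℝ, Pt α r d x = Pa α r d x) ∧
    Pt α r d 1 = 2 * α * r - 2 * d + 1 := by
  have hmain : ∀ x : ℝ, Pt α r d x = Pa α r d x := by
    intro x
    have hPa : Pa α r d x = ∑ i ∈ range (r+1), binomProb α r i *
        (∑ j ∈ range (r+d+1),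
          (∏ l ∈ range (2*j), ((((i:ℤ) + j - d : ℤ) : ℝ) - l)) * (-1:ℝ)^((i:ℤ) + j - d - 2*j)
            * (2*x)^(2*j) / ((2*j).factorial : ℝ)) := by
      rw [Pa]
      have h1 : ∀ j ∈ range (r+d+1),
          iteratedDeriv (2*j) (fun t : ℝ => t ^ ((j:ℤ) - (d:ℤ)) * (1 - α + α*t) ^ r) (-1)
            * (2*x)^(2*j) / ((2*j).factorial : ℝ)
          = ∑ i ∈ range (r+1), binomProb α r i *
              ((∏ l ∈ range (2*j), ((((i:ℤ)+j-d : ℤ):ℝ) - l)) * (-1:ℝ)^((i:ℤ)+j-d-2*j)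
                * (2*x)^(2*j) / ((2*j).factorial : ℝ)) := by
        intro j _
        rw [iteratedDeriv_fj α r d j, Finset.sum_mul, Finset.sum_div]
        refine Finset.sum_congr rfl fun i _ => ?_
        ring
      rw [Finset.sum_congr rfl h1, Finset.sum_comm]
      exact Finset.sum_congr rfl fun i _ => (Finset.mul_sum _ _ _).symm
    rw [hPa, combine_sum r d _ (fun i hi => by rw [binomProb_vanish α r i hi, zero_mul]), Pt]
    have hIcc : ∀ i ∈ Finset.Icc d r, binomProb α r i *
        (∑ j ∈ range (r+d+1),
          (∏ l ∈ range (2*j), ((((i:ℤ) + j - d : ℤ) : ℝ) - l)) * (-1:ℝ)^((i:ℤ) + j - d - 2*j)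
            * (2*x)^(2*j) / ((2*j).factorial : ℝ))
        = binomProb α r i * (Polynomial.Chebyshev.U ℝ (2*((i:ℤ) - d))).eval x := by
      intro i hi
      obtain ⟨hdi, hir⟩ := Finset.mem_Icc.mp hi
      rw [show r + d + 1 = (r+d) + 1 from rfl, Ei_ge d i (r+d) hdi (by omega) x]
    have hlt : ∀ i ∈ range d, binomProb α r i *
        (∑ j ∈ range (r+d+1),
          (∏ l ∈ range (2*j), ((((i:ℤ) + j - d : ℤ) : ℝ) - l)) * (-1:ℝ)^((i:ℤ) + j - d - 2*j)
            * (2*x)^(2*j) / ((2*j).factorial : ℝ))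
        = -(binomProb α r i * (Polynomial.Chebyshev.U ℝ (2*((d:ℤ) - i - 1))).eval x) := by
      intro i hi
      have hi' : i < d := Finset.mem_range.mp hi
      rw [show r + d + 1 = (r+d) + 1 from rfl, Ei_lt d i (r+d) hi' (by omega) x]
      ring
    rw [Finset.sum_congr rfl hIcc, Finset.sum_congr rfl hlt, Finset.sum_neg_distrib]
    ring
  refine ⟨hmain, ?_⟩
  rw [Pt]
  have hIcc1 : ∀ i ∈ Finset.Icc d r, binomProb α r i *
      (Polynomial.Chebyshev.U ℝ (2*((i:ℤ)-d))).eval 1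
      = binomProb α r i * (2*(i:ℝ) - 2*d + 1) := by
    intro i hi
    obtain ⟨hdi, hir⟩ := Finset.mem_Icc.mp hi
    rw [show (2*((i:ℤ)-d)) = ((2*(i-d) : ℕ):ℤ) by omega, U_eval_one]
    congr 1
    have h' : ((2*(i-d) : ℕ):ℤ) = 2*(i:ℤ) - 2*(d:ℤ) := by omega
    have h'' : ((2*(i-d) : ℕ):ℝ) = 2*(i:ℝ) - 2*(d:ℝ) := by exact_mod_cast h'
    rw [h'']
  have hlt1 : ∀ i ∈ range d, binomProb α r i *
      (Polynomial.Chebyshev.U ℝ (2*((d:ℤ) - i - 1))).eval 1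
      = -(binomProb α r i * (2*(i:ℝ) - 2*d + 1)) := by
    intro i hi
    have hi' : i < d := Finset.mem_range.mp hi
    rw [show (2*((d:ℤ)-i-1)) = ((2*(d-1-i) : ℕ):ℤ) by omega, U_eval_one]
    have h' : ((2*(d-1-i) : ℕ):ℤ) = 2*(d:ℤ) - 2*(i:ℤ) - 2 := by omega
    have h'' : ((2*(d-1-i) : ℕ):ℝ) = 2*(d:ℝ) - 2*(i:ℝ) - 2 := by exact_mod_cast h'
    rw [h'']
    ring
  rw [Finset.sum_congr rfl hIcc1, Finset.sum_congr rfl hlt1, Finset.sum_neg_distrib]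
  have hcomb := combine_sum r d (fun i => binomProb α r i * (2*(i:ℝ) - 2*d + 1))
    (fun i hi => by
      show binomProb α r i * (2*(i:ℝ) - 2*d + 1) = 0
      rw [binomProb_vanish α r i hi, zero_mul])
  rw [sub_neg_eq_add, ← hcomb]
  obtain ⟨r', rfl⟩ : ∃ r', r = r' + 1 := ⟨r-1, by omega⟩
  have hexp : ∑ i ∈ range (r'+1+1), binomProb α (r'+1) i * (2*(i:ℝ) - 2*d + 1)
      = 2 * (∑ i ∈ range (r'+1+1), (i:ℝ) * binomProb α (r'+1) i)
        - (2*(d:ℝ) - 1) * (∑ i ∈ range (r'+1+1), binomProb α (r'+1) i) := by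
    rw [Finset.mul_sum, Finset.mul_sum, ← Finset.sum_sub_distrib]
    exact Finset.sum_congr rfl fun i _ => by ring
  rw [hexp, sum_i_binomProb α r', sum_binomProb α (r'+1)]
  push_cast
  ring
end
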